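/- arXiv:2102.00935 — 9 statements merged into one kernel-verified Lean document; each statement's English description precedes it below -/
import Mathlib

section
/- For partitions λ and μ of the same positive integer n with at most r parts, the Kostka coefficient K_{λ,μ} (the number of semistandard Young tableaux of shape λ and content μ) is positive if and only if λ dominates μ, i.e., for every t with 1 ≤ t ≤ r, the sum of the first t parts of λ is at least the sum of the first t parts of μ. -/
open Finset

def kstrip (s : ℕ) (f : ℕ → ℕ) : ℕ → ℕ := fun i => f i - min s (f i) + min s (f (i + 1))

def kchain (r : ℕ) (lam mu : ℕ → ℕ) : ℕ → ℕ → ℕ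
  | 0 => lam
  | j + 1 => kstrip (mu (r - 1 - j)) (kchain r lam mu j)

lemma kstrip_def (s : ℕ) (f : ℕ → ℕ) (i : ℕ) :
    kstrip s f i = f i - min s (f i) + min s (f (i + 1)) := rfl

lemma kstrip_le (s : ℕ) (f : ℕ → ℕ) (hf : Antitone f) (i : ℕ) : kstrip s f i ≤ f i := by
  have h := hf (show i ≤ i + 1 by omega); rw [kstrip_def]; omega

lemma kstrip_strip (s : ℕ) (f : ℕ → ℕ) (hf : Antitone f) (i : ℕ) :
    f (i + 1) ≤ kstrip s f i := by
  have h := hf (show i ≤ i + 1 by omega); rw [kstrip_def]; omega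

lemma kstrip_antitone (s : ℕ) (f : ℕ → ℕ) (hf : Antitone f) : Antitone (kstrip s f) := by
  apply antitone_nat_of_succ_le
  intro i
  have h1 := kstrip_strip s f hf i
  have h2 := kstrip_le s f hf (i + 1)
  omega

lemma kstrip_sum (s : ℕ) (f : ℕ → ℕ) (t : ℕ) :
    (∑ i ∈ range t, kstrip s f i) + min s (f 0) = (∑ i ∈ range t, f i) + min s (f t) := by
  induction t with
  | zero => simp
  | succ t ih =>
    rw [sum_range_succ, sum_range_succ]
    have h := kstrip_def s f t
    have hm : min s (f t) ≤ f t := by omega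
    omega

lemma kchain_succ (r : ℕ) (lam mu : ℕ → ℕ) (j : ℕ) :
    kchain r lam mu (j + 1) = kstrip (mu (r - 1 - j)) (kchain r lam mu j) := rfl

lemma kchain_inv (r : ℕ) (lam mu : ℕ → ℕ)
    (hlam : Antitone lam) (hmu : Antitone mu)
    (hlam0 : ∀ i, r ≤ i → lam i = 0)
    (heq : ∑ i ∈ range r, lam i = ∑ i ∈ range r, mu i)
    (hdom : ∀ t, t ≤ r → ∑ i ∈ range t, mu i ≤ ∑ i ∈ range t, lam i) :
    ∀ j, j ≤ r →
      Antitone (kchain r lam mu j) ∧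
      (∀ i, kchain r lam mu j i ≤ lam i) ∧
      (∀ i, r - j ≤ i → kchain r lam mu j i = 0) ∧
      (∑ i ∈ range r, kchain r lam mu j i = ∑ m ∈ range (r - j), mu m) ∧
      (∀ t, t ≤ r - j → ∑ i ∈ range t, mu i ≤ ∑ i ∈ range t, kchain r lam mu j i) := by
  intro j
  induction j with
  | zero =>
    intro _
    refine ⟨hlam, fun i => le_refl _, fun i hi => hlam0 i (by omega), by simpa [kchain] using heq,
      fun t ht => hdom t (by omega)⟩
  | succ j ih =>
    intro hj
    obtain ⟨ha, hle, hz, hsum, hd⟩ := ih (by omega)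
    set f := kchain r lam mu j with hf
    have hjr : j < r := by omega
    have hstep : kchain r lam mu (j + 1) = kstrip (mu (r - 1 - j)) f := rfl
    set s := mu (r - 1 - j) with hs
    -- f vanishes from r - j on
    have hfr : f r = 0 := hz r (by omega)
    -- s ≤ f 0
    have hs0 : s ≤ f 0 := by
      have h1 : mu (r - 1 - j) ≤ mu 0 := hmu (by omega)
      have h2 := hd 1 (by omega)
      simp only [sum_range_one] at h2
      omega
    -- sum of f over range r equals sum over range (r - j)
    have hsum' : ∑ i ∈ range (r - j), f i = ∑ i ∈ range r, f i := by
      apply sum_subset (range_subset_range.mpr (by omega))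
      intro x hx hx'
      exact hz x (by simp only [mem_range] at hx hx' ⊢; omega)
    -- last row of f is at most s
    have hrj : r - j = (r - 1 - j) + 1 := by omega
    have hlast : f (r - 1 - j) ≤ s := by
      have h1 : ∑ i ∈ range (r - j), f i = ∑ m ∈ range (r - j), mu m := by
        rw [hsum']; exact hsum
      rw [hrj, sum_range_succ, sum_range_succ] at h1
      have h2 := hd (r - 1 - j) (by omega)
      omega
    have key := kstrip_sum s f
    have hmin0 : min s (f 0) = s := by omega
    refine ⟨kstrip_antitone s f ha, ?_, ?_, ?_, ?_⟩
    · intro i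
      rw [hstep]
      exact le_trans (kstrip_le s f ha i) (hle i)
    · intro i hi
      rw [hstep, kstrip_def]
      have h1 : f (i + 1) = 0 := hz (i + 1) (by omega)
      have h2 : f i ≤ f (r - 1 - j) := ha (by omega)
      omega
    · rw [hstep]
      have k := key r
      rw [hmin0, hfr] at k
      have h1 : (∑ m ∈ range (r - j), mu m) = (∑ m ∈ range (r - 1 - j), mu m) + s := by
        rw [hrj, sum_range_succ]
      have h2 : r - (j + 1) = r - 1 - j := by omega
      rw [h2]
      omega
    · intro t ht
      rw [hstep]
      have k := key t
      rw [hmin0] at k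
      have h1 := hd t (by omega)
      have h2 := hd (t + 1) (by omega)
      rw [sum_range_succ, sum_range_succ] at h2
      have h3 : s ≤ mu t := hmu (by omega)
      omega

def krho (r : ℕ) (lam mu : ℕ → ℕ) (k : ℕ) : ℕ → ℕ := kchain r lam mu (r - k)

section rho

variable {r : ℕ} {lam mu : ℕ → ℕ}
  (hlam : Antitone lam) (hmu : Antitone mu)
  (hlam0 : ∀ i, r ≤ i → lam i = 0) (hmu0 : ∀ i, r ≤ i → mu i = 0)
  (heq : ∑ i ∈ range r, lam i = ∑ i ∈ range r, mu i)
  (hdom : ∀ t, t ≤ r → ∑ i ∈ range t, mu i ≤ ∑ i ∈ range t, lam i)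

include hlam hmu hlam0 heq hdom

lemma kchain_antitone : ∀ j, j ≤ r → Antitone (kchain r lam mu j) :=
  fun j hj => (kchain_inv r lam mu hlam hmu hlam0 heq hdom j hj).1

lemma kchain_decr : ∀ j1 j2, j1 ≤ j2 → j2 ≤ r → ∀ i,
    kchain r lam mu j2 i ≤ kchain r lam mu j1 i := by
  intro j1 j2
  induction j2 with
  | zero =>
    intro h _ i
    have : j1 = 0 := by omega
    rw [this]
  | succ j2 ih =>
    intro h hr i
    rcases Nat.eq_or_lt_of_le h with h' | h'
    · rw [h']
    · have step : kchain r lam mu (j2 + 1) i ≤ kchain r lam mu j2 i := by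
        rw [kchain_succ]
        exact kstrip_le _ _ (kchain_antitone hlam hmu hlam0 heq hdom j2 (by omega)) i
      exact le_trans step (ih (by omega) (by omega) i)

lemma krho_le_lam : ∀ k i, krho r lam mu k i ≤ lam i := by
  intro k i
  have := kchain_decr hlam hmu hlam0 heq hdom 0 (r - k) (by omega) (by omega) i
  simpa [kchain, krho] using this

lemma krho_zero : ∀ i, krho r lam mu 0 i = 0 := by
  intro i
  exact (kchain_inv r lam mu hlam hmu hlam0 heq hdom r (le_refl r)).2.2.1 i (by omega)

omit hlam hmu hlam0 heq hdom in
lemma krho_r : ∀ i, krho r lam mu r i = lam i := by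
  intro i; simp [krho, kchain]

lemma krho_mono : ∀ k k', k ≤ k' → ∀ i, krho r lam mu k i ≤ krho r lam mu k' i := by
  intro k k' h i
  exact kchain_decr hlam hmu hlam0 heq hdom (r - k') (r - k) (by omega) (by omega) i

lemma krho_antitone (k : ℕ) : Antitone (krho r lam mu k) :=
  kchain_antitone hlam hmu hlam0 heq hdom (r - k) (by omega)

lemma krho_strip : ∀ k i, krho r lam mu (k + 1) (i + 1) ≤ krho r lam mu k i := by
  intro k i
  by_cases hk : k < r
  · have h1 : r - k = (r - (k + 1)) + 1 := by omega
    have h2 : r - 1 - (r - (k + 1)) = k := by omega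
    unfold krho
    rw [h1, kchain_succ, h2]
    exact kstrip_strip _ _ (kchain_antitone hlam hmu hlam0 heq hdom (r - (k+1)) (by omega)) i
  · have h1 : r - k = 0 := by omega
    have h2 : r - (k + 1) = 0 := by omega
    unfold krho
    rw [h1, h2]
    exact hlam (by omega)

include hmu0 in
lemma krho_sum : ∀ k, ∑ i ∈ range r, krho r lam mu k i = ∑ m ∈ range k, mu m := by
  intro k
  have h := (kchain_inv r lam mu hlam hmu hlam0 heq hdom (r - k) (by omega)).2.2.2.1
  by_cases hk : k ≤ r
  · have : r - (r - k) = k := by omega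
    rw [this] at h
    exact h
  · have : r - (r - k) = r := by omega
    rw [this] at h
    rw [show (krho r lam mu k) = kchain r lam mu (r - k) from rfl, h]
    apply sum_subset (range_subset_range.mpr (by omega))
    intro x hx hx'
    exact hmu0 x (by simp only [mem_range] at hx'; omega)

end rho

noncomputable def kentry (r : ℕ) (lam mu : ℕ → ℕ) (i j : ℕ) : ℕ :=
  sInf {k | j < krho r lam mu (k + 1) i}

section entry

variable {r : ℕ} {lam mu : ℕ → ℕ}
  (hlam : Antitone lam) (hmu : Antitone mu)
  (hlam0 : ∀ i, r ≤ i → lam i = 0) (hmu0 : ∀ i, r ≤ i → mu i = 0)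
  (heq : ∑ i ∈ range r, lam i = ∑ i ∈ range r, mu i)
  (hdom : ∀ t, t ≤ r → ∑ i ∈ range t, mu i ≤ ∑ i ∈ range t, lam i)

include hlam hmu hlam0 heq hdom

omit hlam hmu heq hdom in
lemma kentry_nonempty (mu : ℕ → ℕ) {i j : ℕ} (hij : j < lam i) :
    {k | j < krho r lam mu (k + 1) i}.Nonempty := by
  have hr : 0 < r := by
    by_contra h
    have := hlam0 i (by omega)
    omega
  refine ⟨r - 1, ?_⟩
  have h1 : r - 1 + 1 = r := by omega
  simp only [Set.mem_setOf_eq, h1, krho_r]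
  exact hij

lemma kentry_zero {i j : ℕ} (hij : lam i ≤ j) : kentry r lam mu i j = 0 := by
  have he : {k | j < krho r lam mu (k + 1) i} = ∅ := by
    ext k
    simp only [Set.mem_setOf_eq, Set.mem_empty_iff_false, iff_false, not_lt]
    exact le_trans (krho_le_lam hlam hmu hlam0 heq hdom (k + 1) i) hij
  rw [kentry, he, Nat.sInf_empty]

lemma kentry_spec {i j : ℕ} (hij : j < lam i) :
    krho r lam mu (kentry r lam mu i j) i ≤ j ∧
      j < krho r lam mu (kentry r lam mu i j + 1) i := by
  have hm := Nat.sInf_mem (kentry_nonempty hlam0 mu hij)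
  constructor
  · rcases Nat.eq_zero_or_pos (kentry r lam mu i j) with h | h
    · rw [h, krho_zero hlam hmu hlam0 heq hdom]
      omega
    · have h2 : kentry r lam mu i j - 1 < sInf {k | j < krho r lam mu (k + 1) i} := by
        rw [show sInf {k | j < krho r lam mu (k + 1) i} = kentry r lam mu i j from rfl]
        omega
      have h3 := Nat.notMem_of_lt_sInf h2
      simp only [Set.mem_setOf_eq, not_lt] at h3
      have h4 : kentry r lam mu i j - 1 + 1 = kentry r lam mu i j := by omega
      rwa [h4] at h3
  · exact hm

lemma kentry_eq_iff {i j k : ℕ} (hij : j < lam i) :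
    kentry r lam mu i j = k ↔
      krho r lam mu k i ≤ j ∧ j < krho r lam mu (k + 1) i := by
  constructor
  · rintro rfl
    exact kentry_spec hlam hmu hlam0 heq hdom hij
  · rintro ⟨h1, h2⟩
    have hle : kentry r lam mu i j ≤ k := Nat.sInf_le h2
    rcases Nat.eq_or_lt_of_le hle with h | h
    · exact h
    · exfalso
      have h3 := (kentry_spec hlam hmu hlam0 heq hdom hij).2
      have h4 : kentry r lam mu i j + 1 ≤ k := by omega
      have h5 := krho_mono hlam hmu hlam0 heq hdom _ _ h4 i
      omega

lemma kentry_col_step {i j : ℕ} (hij : j < lam (i + 1)) :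
    kentry r lam mu i j < kentry r lam mu (i + 1) j := by
  set e2 := kentry r lam mu (i + 1) j with he2
  have hs := kentry_spec hlam hmu hlam0 heq hdom hij
  rw [← he2] at hs
  rcases Nat.eq_zero_or_pos e2 with h | h
  · exfalso
    have h1 : j < krho r lam mu 1 (i + 1) := by
      have := hs.2
      rw [h] at this
      simpa using this
    have h2 : krho r lam mu 1 (i + 1) ≤ krho r lam mu 0 i := by
      simpa using krho_strip hlam hmu hlam0 heq hdom 0 i
    have h3 := krho_zero hlam hmu hlam0 heq hdom i
    omega
  · have h1 : j < krho r lam mu e2 i := by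
      have h2 := krho_strip hlam hmu hlam0 heq hdom e2 i
      omega
    have h4 : e2 - 1 + 1 = e2 := by omega
    have h5 : kentry r lam mu i j ≤ e2 - 1 := Nat.sInf_le (by
      simp only [Set.mem_setOf_eq, h4]; exact h1)
    omega

lemma kentry_col {i1 i2 j : ℕ} (hi : i1 < i2) (hij : j < lam i2) :
    kentry r lam mu i1 j < kentry r lam mu i2 j := by
  induction i2 with
  | zero => omega
  | succ i2 ih =>
    rcases Nat.eq_or_lt_of_le (Nat.lt_succ_iff.mp hi) with h | h
    · rw [h]
      exact kentry_col_step hlam hmu hlam0 heq hdom hij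
    · have hij2 : j < lam i2 := lt_of_lt_of_le hij (hlam (by omega))
      exact lt_trans (ih h hij2) (kentry_col_step hlam hmu hlam0 heq hdom hij)

end entry

lemma card_band {r : ℕ} {lam : ℕ → ℕ} (hlam0 : ∀ i, r ≤ i → lam i = 0)
    (Y : YoungDiagram) (hY : ∀ i j, (i, j) ∈ Y ↔ j < lam i)
    (a b : ℕ → ℕ) (hb : ∀ i, b i ≤ lam i) (p : ℕ × ℕ → Prop) [DecidablePred p]
    (hp : ∀ c : ℕ × ℕ, c ∈ Y.cells → (p c ↔ a c.1 ≤ c.2 ∧ c.2 < b c.1)) :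
    (Y.cells.filter p).card = ∑ i ∈ range r, (b i - a i) := by
  have hfc : Y.cells.filter p = Y.cells.filter (fun c => a c.1 ≤ c.2 ∧ c.2 < b c.1) :=
    filter_congr (fun c hc => by rw [hp c hc])
  have hset : Y.cells.filter (fun c => a c.1 ≤ c.2 ∧ c.2 < b c.1) =
      (range r).biUnion (fun i =>
        (Ico (a i) (b i)).map ⟨fun j => (i, j), fun x y h => by simpa using h⟩) := by
    ext c
    obtain ⟨i, j⟩ := c
    simp only [mem_filter, YoungDiagram.mem_cells, mem_biUnion, mem_range, mem_map, mem_Ico,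
      Function.Embedding.coeFn_mk, Prod.mk.injEq]
    constructor
    · rintro ⟨hy, h1, h2⟩
      have hil : j < lam i := (hY i j).mp hy
      have hir : i < r := by
        by_contra h
        have := hlam0 i (by omega)
        omega
      exact ⟨i, hir, j, ⟨h1, h2⟩, rfl⟩
    · rintro ⟨i', hi', j', ⟨h1, h2⟩, hij⟩
      obtain ⟨rfl, rfl⟩ := Prod.mk.inj hij
      exact ⟨(hY i' j').mpr (lt_of_lt_of_le h2 (hb i')), h1, h2⟩
  rw [hfc, hset, card_biUnion]
  · exact sum_congr rfl (fun i _ => by rw [card_map, Nat.card_Ico])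
  · intro x hx y hy hxy
    simp only [Function.onFun, Finset.disjoint_left]
    rintro ⟨i, j⟩ h1 h2
    simp only [mem_map, Function.Embedding.coeFn_mk, Prod.mk.injEq, mem_Ico] at h1 h2
    obtain ⟨j1, _, rfl, rfl⟩ := h1
    obtain ⟨j2, _, h⟩ := h2
    exact hxy (Prod.mk.inj h).1.symm

lemma card_filter_lt_val (s : Finset (ℕ × ℕ)) (g : ℕ × ℕ → ℕ) (t : ℕ) :
    (s.filter fun c => g c < t).card = ∑ k ∈ range t, (s.filter fun c => g c = k).card := by
  rw [← card_biUnion]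
  · congr 1
    ext c
    simp only [mem_biUnion, mem_range, mem_filter]
    constructor
    · rintro ⟨hc, hlt⟩
      exact ⟨g c, hlt, hc, rfl⟩
    · rintro ⟨k, hk, hc, rfl⟩
      exact ⟨hc, hk⟩
  · intro x hx y hy hxy
    simp only [Function.onFun, Finset.disjoint_left]
    intro c h1 h2
    simp only [mem_filter] at h1 h2
    exact hxy (h1.2 ▸ h2.2.symm ▸ rfl)

lemma ssyt_row_le (Y : YoungDiagram) (T : SemistandardYoungTableau Y) :
    ∀ i j, (i, j) ∈ Y → i ≤ T i j := by
  intro i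
  induction i with
  | zero => intro j _; omega
  | succ i ih =>
    intro j h
    show i + 1 ≤ T (i + 1) j
    have h' : (i, j) ∈ Y := Y.up_left_mem (by omega) (le_refl j) h
    have h1 : T i j < T (i + 1) j := T.col_strict (by omega) h
    have h2 := ih j h'
    omega


/-- For partitions `lam` and `mu` of the same positive integer `n` with at most
`r` parts, the Kostka coefficient (the number of semistandard Young tableaux of shape `lam`
and content `mu`) is positive iff `lam` dominates `mu`. Partitions are represented as
antitone functions `ℕ → ℕ` vanishing from index `r` on (0-indexed parts), and the Young
diagram `Y` of `lam` is characterized by `(i, j) ∈ Y ↔ j < lam i`. Entries of tableaux are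
0-indexed: the content condition says there are `mu k` entries equal to `k`. -/
theorem stmt0 (r n : ℕ) (hn : 0 < n) (lam mu : ℕ → ℕ)
    (hlam : Antitone lam) (hmu : Antitone mu)
    (hlam0 : ∀ i, r ≤ i → lam i = 0) (hmu0 : ∀ i, r ≤ i → mu i = 0)
    (hlamn : ∑ i ∈ Finset.range r, lam i = n) (hmun : ∑ i ∈ Finset.range r, mu i = n)
    (Y : YoungDiagram) (hY : ∀ i j, (i, j) ∈ Y ↔ j < lam i) :
    0 < Nat.card {T : SemistandardYoungTableau Y //
        ∀ k, (Y.cells.filter fun c => T c.1 c.2 = k).card = mu k} ↔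
      ∀ t, 1 ≤ t → t ≤ r → ∑ i ∈ Finset.range t, mu i ≤ ∑ i ∈ Finset.range t, lam i := by
  have hcell : ∀ c : ℕ × ℕ, c ∈ Y.cells → c.2 < lam c.1 := by
    intro c hc
    have : c ∈ Y := (YoungDiagram.mem_cells (μ := Y) c).mp hc
    rw [← Prod.mk.eta (p := c)] at this
    exact (hY c.1 c.2).mp this
  constructor
  · -- positivity implies dominance
    intro hpos t ht1 htr
    obtain ⟨⟨T, hT⟩⟩ := (Nat.card_pos_iff.mp hpos).1
    have h1 : (Y.cells.filter fun c => T c.1 c.2 < t).card = ∑ k ∈ range t, mu k := by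
      rw [card_filter_lt_val Y.cells (fun c => T c.1 c.2) t]
      exact sum_congr rfl (fun k _ => hT k)
    have h2 : (Y.cells.filter fun c => c.1 < t).card = ∑ i ∈ range t, lam i := by
      have hb : ∀ i, (if i < t then lam i else 0) ≤ lam i := by
        intro i; split <;> omega
      rw [card_band hlam0 Y hY (fun _ => 0) (fun i => if i < t then lam i else 0) hb
        (fun c => c.1 < t) ?_]
      · have e1 : ∀ i ∈ range r,
            ((fun i => if i < t then lam i else 0) i - (fun _ : ℕ => 0) i)
              = if i < t then lam i else 0 := fun i _ => by simp
        rw [sum_congr rfl e1, ← sum_filter]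
        congr 1
        ext i
        simp only [mem_filter, mem_range]
        omega
      · intro c hc
        have := hcell c hc
        constructor
        · intro h
          simp only [if_pos h]
          omega
        · rintro ⟨-, h⟩
          by_contra hlt
          simp only [if_neg hlt] at h
          omega
    have hsub : (Y.cells.filter fun c => T c.1 c.2 < t) ⊆
        (Y.cells.filter fun c => c.1 < t) := by
      intro c hc
      simp only [mem_filter] at hc ⊢
      refine ⟨hc.1, ?_⟩
      have hcY : c ∈ Y := (YoungDiagram.mem_cells (μ := Y) c).mp hc.1
      rw [← Prod.mk.eta (p := c)] at hcY
      have := ssyt_row_le Y T c.1 c.2 hcY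
      have := hc.2
      omega
    calc ∑ i ∈ range t, mu i = (Y.cells.filter fun c => T c.1 c.2 < t).card := h1.symm
      _ ≤ (Y.cells.filter fun c => c.1 < t).card := card_le_card hsub
      _ = ∑ i ∈ range t, lam i := h2
  · -- dominance implies positivity
    intro hdom'
    have hdom : ∀ t, t ≤ r → ∑ i ∈ range t, mu i ≤ ∑ i ∈ range t, lam i := by
      intro t ht
      rcases Nat.eq_zero_or_pos t with h | h
      · subst h; simp
      · exact hdom' t h ht
    have heq : ∑ i ∈ range r, lam i = ∑ i ∈ range r, mu i := by rw [hlamn, hmun]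
    let T0 : SemistandardYoungTableau Y :=
      { entry := fun i j => kentry r lam mu i j
        row_weak' := by
          intro i j1 j2 hj hc2
          have hij2 : j2 < lam i := (hY i j2).mp hc2
          have hs := kentry_spec hlam hmu hlam0 heq hdom hij2
          exact Nat.sInf_le (show j1 < krho r lam mu (kentry r lam mu i j2 + 1) i by omega)
        col_strict' := by
          intro i1 i2 j hi hc2
          exact kentry_col hlam hmu hlam0 heq hdom hi ((hY i2 j).mp hc2)
        zeros' := by
          intro i j hij
          refine kentry_zero hlam hmu hlam0 heq hdom ?_
          by_contra h
          exact hij ((hY i j).mpr (by omega)) }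
    have hT0 : ∀ i j, T0 i j = kentry r lam mu i j := fun _ _ => rfl
    have hcontent : ∀ k, (Y.cells.filter fun c => T0 c.1 c.2 = k).card = mu k := by
      intro k
      have hmono : ∀ i, krho r lam mu k i ≤ krho r lam mu (k + 1) i :=
        krho_mono hlam hmu hlam0 heq hdom k (k + 1) (by omega)
      rw [card_band hlam0 Y hY (krho r lam mu k) (krho r lam mu (k + 1))
        (krho_le_lam hlam hmu hlam0 heq hdom (k + 1))
        (fun c => T0 c.1 c.2 = k) ?_]
      · have hsum1 := krho_sum hlam hmu hlam0 hmu0 heq hdom k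
        have hsum2 := krho_sum hlam hmu hlam0 hmu0 heq hdom (k + 1)
        have hadd : ∑ i ∈ range r, (krho r lam mu (k + 1) i - krho r lam mu k i) +
            ∑ i ∈ range r, krho r lam mu k i = ∑ i ∈ range r, krho r lam mu (k + 1) i := by
          rw [← sum_add_distrib]
          exact sum_congr rfl (fun i _ => by have := hmono i; omega)
        rw [sum_range_succ] at hsum2
        omega
      · intro c hc
        show T0 c.1 c.2 = k ↔ _
        rw [hT0]
        exact kentry_eq_iff hlam hmu hlam0 heq hdom (hcell c hc)
    have hne : Nonempty {T : SemistandardYoungTableau Y //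
        ∀ k, (Y.cells.filter fun c => T c.1 c.2 = k).card = mu k} := ⟨⟨T0, hcontent⟩⟩
    have hr : 0 < r := by
      by_contra h
      rw [show r = 0 by omega] at hlamn
      simp at hlamn
      omega
    have hfin : Finite {T : SemistandardYoungTableau Y //
        ∀ k, (Y.cells.filter fun c => T c.1 c.2 = k).card = mu k} := by
      have hbound : ∀ (T : {T : SemistandardYoungTableau Y //
          ∀ k, (Y.cells.filter fun c => T c.1 c.2 = k).card = mu k}) (c : Y.cells),
          T.1 c.1.1 c.1.2 < r := by
        intro T c
        by_contra h
        have h0 := T.2 (T.1 c.1.1 c.1.2)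
        have hv0 : mu (T.1 c.1.1 c.1.2) = 0 := hmu0 _ (by omega)
        have hcmem : c.1 ∈ Y.cells.filter (fun c' => T.1 c'.1 c'.2 = T.1 c.1.1 c.1.2) :=
          mem_filter.mpr ⟨c.2, rfl⟩
        have := Finset.card_pos.mpr ⟨c.1, hcmem⟩
        omega
      refine Finite.of_injective
        (fun T => (fun c => ⟨T.1 c.1.1 c.1.2, hbound T c⟩ : Y.cells → Fin r)) ?_
      intro T1 T2 h
      apply Subtype.ext
      apply SemistandardYoungTableau.ext
      intro i j
      by_cases hij : (i, j) ∈ Y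
      · have := congrFun h ⟨(i, j), (YoungDiagram.mem_cells (μ := Y) (i, j)).mpr hij⟩
        exact congrArg Fin.val this
      · rw [T1.1.zeros hij, T2.1.zeros hij]
    exact Nat.card_pos_iff.mpr ⟨hne, hfin⟩
end

section
/- Let λ, μ be partitions with at most r parts and |λ| = |μ|. Then λ dominates μ if and only if there exists an r × λ₁ matrix with entries in {0,1} whose i-th row sums to μ_i and whose j-th column sums to λ'_j, where λ' is the conjugate partition of λ. -/
lemma GR.sum_ite_range (K m : ℕ) (h : m ≤ K) :
    ∑ j ∈ Finset.range K, (if j < m then 1 else 0) = m := by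
  have hfil : (Finset.range K).filter (fun j => j < m) = Finset.range m := by
    ext x; simp only [Finset.mem_filter, Finset.mem_range]; omega
  rw [Finset.sum_ite, Finset.sum_const, Finset.sum_const, hfil, Finset.card_range]
  simp

lemma GR.conj_card (r : ℕ) (lam : ℕ → ℕ) (hlam : Antitone lam) (j t : ℕ) (ht : t ≤ r) :
    ((Finset.range t).filter (fun i => j < lam i)).card
      = min t (((Finset.range r).filter (fun i => j < lam i)).card) := by
  set c := ((Finset.range r).filter (fun i => j < lam i)).card with hc
  have key : ∀ i, i < r → (j < lam i ↔ i < c) := by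
    intro i hir
    constructor
    · intro h
      have hsub : Finset.range (i+1) ⊆ (Finset.range r).filter (fun k => j < lam k) := by
        intro x hx
        simp only [Finset.mem_range] at hx
        simp only [Finset.mem_filter, Finset.mem_range]
        exact ⟨by omega, h.trans_le (hlam (by omega))⟩
      have := Finset.card_le_card hsub
      rw [Finset.card_range] at this
      omega
    · intro h
      by_contra hnot
      push_neg at hnot
      have hsub : (Finset.range r).filter (fun k => j < lam k) ⊆ Finset.range i := by
        intro x hx
        simp only [Finset.mem_filter, Finset.mem_range] at hx
        simp only [Finset.mem_range]
        by_contra hxi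
        push_neg at hxi
        have : lam x ≤ lam i := hlam hxi
        omega
      have := Finset.card_le_card hsub
      rw [Finset.card_range] at this
      omega
  have heq : (Finset.range t).filter (fun i => j < lam i) = Finset.range (min t c) := by
    ext x
    simp only [Finset.mem_filter, Finset.mem_range, lt_min_iff]
    constructor
    · rintro ⟨hx, hj⟩
      exact ⟨hx, (key x (by omega)).1 hj⟩
    · rintro ⟨hx, hxc⟩
      exact ⟨hx, (key x (by omega)).2 hxc⟩
  rw [heq, Finset.card_range]

lemma GR.step {r K : ℕ} (col : Fin K → ℕ) (mu : ℕ → ℕ) (hmu : Antitone mu) :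
    ∀ D : ℕ, ∀ ν : ℕ → ℕ,
      (∑ t ∈ Finset.range (r+1),
        (∑ i ∈ Finset.range t, ν i - ∑ i ∈ Finset.range t, mu i)) = D →
      (∀ t, t ≤ r → ∑ i ∈ Finset.range t, mu i ≤ ∑ i ∈ Finset.range t, ν i) →
      (∑ i ∈ Finset.range r, ν i = ∑ i ∈ Finset.range r, mu i) →
      (∃ A : Fin r → Fin K → ℕ, (∀ i j, A i j ≤ 1) ∧
        (∀ i : Fin r, ∑ j, A i j = ν i.val) ∧ (∀ j, ∑ i, A i j = col j)) →
      ∃ A : Fin r → Fin K → ℕ, (∀ i j, A i j ≤ 1) ∧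
        (∀ i : Fin r, ∑ j, A i j = mu i.val) ∧ (∀ j, ∑ i, A i j = col j) := by
  intro D
  induction D using Nat.strong_induction_on with
  | _ D IH =>
  rintro ν hD hdom htot ⟨A, hA1, hA2, hA3⟩
  by_cases hall : ∀ i, i < r → ν i = mu i
  · exact ⟨A, hA1, fun i => (hA2 i).trans (hall i.val i.isLt), hA3⟩
  push_neg at hall
  obtain ⟨a, ⟨har, hane⟩, hamin⟩ :
      ∃ a, (a < r ∧ ν a ≠ mu a) ∧ ∀ i, i < a → ¬(i < r ∧ ν i ≠ mu i) :=
    ⟨Nat.find hall, Nat.find_spec hall, fun i hi => Nat.find_min hall hi⟩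
  have haeq : ∀ i, i < a → ν i = mu i := by
    intro i hia
    by_contra hne
    exact hamin i hia ⟨by omega, hne⟩
  have hpref_a : ∑ i ∈ Finset.range a, ν i = ∑ i ∈ Finset.range a, mu i :=
    Finset.sum_congr rfl (fun i hi => haeq i (Finset.mem_range.mp hi))
  have hva : mu a < ν a := by
    have h1 := hdom (a+1) (by omega)
    rw [Finset.sum_range_succ, Finset.sum_range_succ] at h1
    omega
  have hPb : ∃ i, i < r ∧ a < i ∧ ν i < mu i := by
    by_contra hnb
    push_neg at hnb
    have hge : ∀ i ∈ Finset.range r, mu i + (if i = a then 1 else 0) ≤ ν i := by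
      intro i hi
      simp only [Finset.mem_range] at hi
      rcases lt_trichotomy i a with h | h | h
      · rw [if_neg (by omega : ¬ i = a)]
        have := haeq i h; omega
      · subst h; rw [if_pos rfl]; omega
      · rw [if_neg (by omega : ¬ i = a)]
        exact hnb i hi h
    have hs := Finset.sum_le_sum hge
    rw [Finset.sum_add_distrib, Finset.sum_ite_eq' (Finset.range r) a (fun _ => 1),
      if_pos (Finset.mem_range.mpr har)] at hs
    omega
  obtain ⟨b, ⟨hbr, hab, hvb⟩, hbmin⟩ :
      ∃ b, (b < r ∧ a < b ∧ ν b < mu b) ∧ ∀ i, i < b → ¬(i < r ∧ a < i ∧ ν i < mu i) :=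
    ⟨Nat.find hPb, Nat.find_spec hPb, fun i hi => Nat.find_min hPb hi⟩
  have hbeq : ∀ i, a < i → i < b → mu i ≤ ν i := by
    intro i hai hib
    by_contra hne
    push_neg at hne
    exact hbmin i hib ⟨by omega, hai, hne⟩
  have hvab : ν b < ν a := by
    have : mu b ≤ mu a := hmu (by omega : a ≤ b)
    omega
  set ν' : ℕ → ℕ := fun i => if i = a then ν a - 1 else if i = b then ν b + 1 else ν i with hν'
  have hν'a : ν' a = ν a - 1 := by simp [hν']
  have hν'b : ν' b = ν b + 1 := by
    have hba : ¬ b = a := by omega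
    simp [hν', hba]
  have hν'o : ∀ i, i ≠ a → i ≠ b → ν' i = ν i := by
    intro i h1 h2
    simp [hν', h1, h2]
  have hstrict : ∀ t, a < t → t ≤ b →
      ∑ i ∈ Finset.range t, mu i + 1 ≤ ∑ i ∈ Finset.range t, ν i := by
    intro t hat htb
    have hge : ∀ i ∈ Finset.range t, mu i + (if i = a then 1 else 0) ≤ ν i := by
      intro i hi
      simp only [Finset.mem_range] at hi
      rcases lt_trichotomy i a with h | h | h
      · rw [if_neg (by omega : ¬ i = a)]
        have := haeq i h; omega
      · subst h; rw [if_pos rfl]; omega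
      · rw [if_neg (by omega : ¬ i = a)]
        exact hbeq i h (by omega)
    have hs := Finset.sum_le_sum hge
    rw [Finset.sum_add_distrib, Finset.sum_ite_eq' (Finset.range t) a (fun _ => 1),
      if_pos (Finset.mem_range.mpr hat)] at hs
    omega
  have hpre1 : ∀ t, t ≤ a → ∑ i ∈ Finset.range t, ν' i = ∑ i ∈ Finset.range t, ν i := by
    intro t hta
    refine Finset.sum_congr rfl (fun i hi => ?_)
    simp only [Finset.mem_range] at hi
    exact hν'o i (by omega) (by omega)
  have hpre2 : ∀ t, a < t → t ≤ b →
      ∑ i ∈ Finset.range t, ν' i + 1 = ∑ i ∈ Finset.range t, ν i := by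
    intro t hat htb
    have hpt : ∀ i ∈ Finset.range t, ν i = ν' i + (if i = a then 1 else 0) := by
      intro i hi
      simp only [Finset.mem_range] at hi
      rcases eq_or_ne i a with h | h
      · rw [h, hν'a, if_pos rfl]; omega
      · rw [hν'o i h (by omega), if_neg h]
        omega
    rw [Finset.sum_congr rfl hpt, Finset.sum_add_distrib,
      Finset.sum_ite_eq' (Finset.range t) a (fun _ => 1),
      if_pos (Finset.mem_range.mpr hat)]
  have hpre3 : ∀ t, b < t → ∑ i ∈ Finset.range t, ν' i = ∑ i ∈ Finset.range t, ν i := by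
    intro t hbt
    have hpt : ∀ i ∈ Finset.range t, ν' i + (if i = a then 1 else 0)
        = ν i + (if i = b then 1 else 0) := by
      intro i _
      rcases eq_or_ne i a with h | h
      · rw [h, hν'a, if_pos rfl, if_neg (by omega : ¬ a = b)]
        omega
      rcases eq_or_ne i b with h2 | h2
      · rw [h2, hν'b, if_neg (by omega : ¬ b = a), if_pos rfl]
      · rw [hν'o i h h2, if_neg h, if_neg h2]
    have hs := Finset.sum_congr rfl hpt
    rw [Finset.sum_add_distrib, Finset.sum_add_distrib,
      Finset.sum_ite_eq' (Finset.range t) a (fun _ => 1),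
      Finset.sum_ite_eq' (Finset.range t) b (fun _ => 1),
      if_pos (Finset.mem_range.mpr (by omega : a < t)),
      if_pos (Finset.mem_range.mpr hbt)] at hs
    omega
  have hdom' : ∀ t, t ≤ r → ∑ i ∈ Finset.range t, mu i ≤ ∑ i ∈ Finset.range t, ν' i := by
    intro t htr
    rcases le_or_gt t a with h | h
    · rw [hpre1 t h]; exact hdom t htr
    rcases le_or_gt t b with h2 | h2
    · have h3 := hstrict t h h2
      have h4 := hpre2 t h h2
      omega
    · rw [hpre3 t h2]; exact hdom t htr
  have htot' : ∑ i ∈ Finset.range r, ν' i = ∑ i ∈ Finset.range r, mu i := by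
    rw [hpre3 r hbr]; exact htot
  have hmeas : (∑ t ∈ Finset.range (r+1),
      (∑ i ∈ Finset.range t, ν' i - ∑ i ∈ Finset.range t, mu i)) < D := by
    rw [← hD]
    apply Finset.sum_lt_sum
    · intro t _
      rcases le_or_gt t a with h | h
      · rw [hpre1 t h]
      rcases le_or_gt t b with h2 | h2
      · have h4 := hpre2 t h h2
        omega
      · rw [hpre3 t h2]
    · refine ⟨a+1, Finset.mem_range.mpr (by omega), ?_⟩
      have h1 := hstrict (a+1) (by omega) (by omega)
      have h2 := hpre2 (a+1) (by omega) (by omega)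
      omega
  -- matrix move
  set a' : Fin r := ⟨a, har⟩ with ha'
  set b' : Fin r := ⟨b, hbr⟩ with hb'
  have hab' : a' ≠ b' := by
    simp only [ha', hb', ne_eq, Fin.mk.injEq]
    omega
  have hrowa : ∑ y, A a' y = ν a := hA2 a'
  have hrowb : ∑ y, A b' y = ν b := hA2 b'
  have hexj : ∃ y : Fin K, A b' y < A a' y := by
    by_contra hno
    push_neg at hno
    have hs := Finset.sum_le_sum (fun y (_ : y ∈ Finset.univ) => hno y)
    rw [hrowa, hrowb] at hs
    omega
  obtain ⟨j0, hj0⟩ := hexj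
  have hAaj : A a' j0 = 1 := by have := hA1 a' j0; omega
  have hAbj : A b' j0 = 0 := by omega
  refine IH _ hmeas ν' rfl hdom' htot'
    ⟨fun i y => if i = a' ∧ y = j0 then 0 else if i = b' ∧ y = j0 then 1 else A i y,
      ?_, ?_, ?_⟩
  · intro i y
    dsimp only
    split
    · omega
    split
    · omega
    · exact hA1 i y
  · intro i
    dsimp only
    rcases eq_or_ne i a' with h | h
    · subst h
      have hpt : ∀ y ∈ Finset.univ,
          (if a' = a' ∧ y = j0 then 0 else if a' = b' ∧ y = j0 then 1 else A a' y)
            + (if y = j0 then 1 else 0) = A a' y := by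
        intro y _
        rcases eq_or_ne y j0 with h2 | h2
        · subst h2
          rw [if_pos ⟨rfl, rfl⟩, if_pos rfl]
          omega
        · rw [if_neg (fun hc => h2 hc.2), if_neg (fun hc => h2 hc.2), if_neg h2]
          omega
      have hs := Finset.sum_congr rfl hpt
      rw [Finset.sum_add_distrib, Finset.sum_ite_eq' Finset.univ j0 (fun _ => 1),
        if_pos (Finset.mem_univ j0), hrowa] at hs
      have hv : (a' : Fin r).val = a := rfl
      rw [hv, hν'a]
      omega
    rcases eq_or_ne i b' with h2 | h2
    · subst h2
      have hpt : ∀ y ∈ Finset.univ,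
          (if b' = a' ∧ y = j0 then 0 else if b' = b' ∧ y = j0 then 1 else A b' y)
            = A b' y + (if y = j0 then 1 else 0) := by
        intro y _
        rcases eq_or_ne y j0 with h3 | h3
        · subst h3
          rw [if_neg (fun hc => hab'.symm hc.1), if_pos ⟨rfl, rfl⟩, if_pos rfl]
          omega
        · rw [if_neg (fun hc => h3 hc.2), if_neg (fun hc => h3 hc.2), if_neg h3]
          omega
      rw [Finset.sum_congr rfl hpt, Finset.sum_add_distrib,
        Finset.sum_ite_eq' Finset.univ j0 (fun _ => 1), if_pos (Finset.mem_univ j0), hrowb]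
      have hv : (b' : Fin r).val = b := rfl
      rw [hv, hν'b]
    · have hpt : ∀ y ∈ Finset.univ,
          (if i = a' ∧ y = j0 then 0 else if i = b' ∧ y = j0 then 1 else A i y) = A i y := by
        intro y _
        rw [if_neg (fun hc => h hc.1), if_neg (fun hc => h2 hc.1)]
      rw [Finset.sum_congr rfl hpt, hA2 i]
      have hia : i.val ≠ a := fun hc => h (Fin.ext hc)
      have hib : i.val ≠ b := fun hc => h2 (Fin.ext hc)
      rw [hν'o i.val hia hib]
  · intro y
    dsimp only
    rcases eq_or_ne y j0 with h | h
    · subst h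
      have hpt : ∀ i ∈ Finset.univ,
          (if i = a' ∧ y = y then 0 else if i = b' ∧ y = y then 1 else A i y)
            + (if i = a' then 1 else 0) = A i y + (if i = b' then 1 else 0) := by
        intro i _
        rcases eq_or_ne i a' with h1 | h1
        · subst h1
          rw [if_pos ⟨rfl, rfl⟩, if_pos rfl, if_neg hab']
          omega
        rcases eq_or_ne i b' with h2 | h2
        · subst h2
          rw [if_neg (fun hc => hab'.symm hc.1), if_pos ⟨rfl, rfl⟩, if_neg h1, if_pos rfl]
          omega
        · rw [if_neg (fun hc => h1 hc.1), if_neg (fun hc => h2 hc.1), if_neg h1, if_neg h2]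
      have hs := Finset.sum_congr rfl hpt
      rw [Finset.sum_add_distrib, Finset.sum_add_distrib,
        Finset.sum_ite_eq' Finset.univ a' (fun _ => 1),
        Finset.sum_ite_eq' Finset.univ b' (fun _ => 1),
        if_pos (Finset.mem_univ a'), if_pos (Finset.mem_univ b')] at hs
      have hc := hA3 y
      omega
    · have hpt : ∀ i ∈ Finset.univ,
          (if i = a' ∧ y = j0 then 0 else if i = b' ∧ y = j0 then 1 else A i y) = A i y := by
        intro i _
        rw [if_neg (fun hc => h hc.2), if_neg (fun hc => h hc.2)]
      rw [Finset.sum_congr rfl hpt, hA3 y]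
/-- Gale–Ryser: for partitions `lam`, `mu` of the same number with at most `r`
parts, `lam` dominates `mu` iff there is an `r × lam 0` matrix with entries in `{0,1}` whose
`i`-th row sums to `mu i` and whose `j`-th column sums to `lam'_j`, the `j`-th part of the
conjugate partition of `lam` (0-indexed: `lam'_j = #{i < r : j < lam i}`). -/
theorem stmt3 (r : ℕ) (lam mu : ℕ → ℕ)
    (hlam : Antitone lam) (hmu : Antitone mu)
    (hlam0 : ∀ i, r ≤ i → lam i = 0) (hmu0 : ∀ i, r ≤ i → mu i = 0)
    (hsz : ∑ i ∈ Finset.range r, lam i = ∑ i ∈ Finset.range r, mu i) :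
    (∀ t, t ≤ r → ∑ i ∈ Finset.range t, mu i ≤ ∑ i ∈ Finset.range t, lam i) ↔
      ∃ A : Fin r → Fin (lam 0) → ℕ, (∀ i j, A i j ≤ 1) ∧
        (∀ i, ∑ j, A i j = mu i.val) ∧
        (∀ j : Fin (lam 0), ∑ i, A i j =
          ((Finset.range r).filter fun i => (j : ℕ) < lam i).card) := by
  constructor
  · -- hard direction: dominance → matrix
    intro hdom
    refine GR.step (fun j => ((Finset.range r).filter fun i => (j : ℕ) < lam i).card)
      mu hmu _ lam rfl hdom hsz ⟨fun i j => if (j : ℕ) < lam i.val then 1 else 0, ?_, ?_, ?_⟩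
    · intro i j
      dsimp only
      split <;> omega
    · intro i
      rw [Fin.sum_univ_eq_sum_range (fun jj => if jj < lam i.val then 1 else 0) (lam 0)]
      exact GR.sum_ite_range (lam 0) (lam i.val) (hlam (Nat.zero_le _))
    · intro j
      rw [Fin.sum_univ_eq_sum_range (fun i => if (j : ℕ) < lam i then 1 else 0) r]
      rw [Finset.sum_ite, Finset.sum_const, Finset.sum_const]
      simp
  · -- easy direction: matrix → dominance
    rintro ⟨A, hA1, hA2, hA3⟩ t ht
    set B : ℕ → Fin (lam 0) → ℕ := fun i => if h : i < r then A ⟨i, h⟩ else fun _ => 0 with hB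
    have hBA : ∀ i : Fin r, B i.val = A i := by
      intro i
      simp only [hB]
      rw [dif_pos i.isLt]
    have hBrow : ∀ i, i < r → ∑ j, B i j = mu i := by
      intro i h
      have : B i = A ⟨i, h⟩ := by simp only [hB]; rw [dif_pos h]
      rw [this]
      exact hA2 ⟨i, h⟩
    have hBbound : ∀ i j, B i j ≤ 1 := by
      intro i j
      simp only [hB]
      split
      · exact hA1 _ j
      · exact Nat.zero_le 1
    have hBcol : ∀ j : Fin (lam 0), ∑ i ∈ Finset.range r, B i j =
        ((Finset.range r).filter fun i => (j : ℕ) < lam i).card := by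
      intro j
      rw [← Fin.sum_univ_eq_sum_range (fun i => B i j) r]
      rw [Finset.sum_congr rfl (fun i _ => by rw [hBA i])]
      exact hA3 j
    have key : ∀ j : Fin (lam 0), ∑ i ∈ Finset.range t, B i j ≤
        ((Finset.range t).filter fun i => (j : ℕ) < lam i).card := by
      intro j
      rw [GR.conj_card r lam hlam (j : ℕ) t ht]
      have h1 : ∑ i ∈ Finset.range t, B i j ≤ t := by
        have := Finset.sum_le_card_nsmul (Finset.range t) (fun i => B i j) 1
          (fun i _ => hBbound i j)
        simpa using this
      have h2 : ∑ i ∈ Finset.range t, B i j ≤ ∑ i ∈ Finset.range r, B i j :=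
        Finset.sum_le_sum_of_subset (Finset.range_subset_range.mpr ht)
      rw [hBcol j] at h2
      omega
    calc ∑ i ∈ Finset.range t, mu i
        = ∑ i ∈ Finset.range t, ∑ j, B i j :=
          Finset.sum_congr rfl (fun i hi =>
            (hBrow i (by have := Finset.mem_range.mp hi; omega)).symm)
      _ = ∑ j : Fin (lam 0), ∑ i ∈ Finset.range t, B i j := Finset.sum_comm
      _ ≤ ∑ j : Fin (lam 0), ((Finset.range t).filter fun i => (j : ℕ) < lam i).card :=
          Finset.sum_le_sum (fun j _ => key j)
      _ = ∑ j : Fin (lam 0), ∑ i ∈ Finset.range t, (if (j : ℕ) < lam i then 1 else 0) := by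
          refine Finset.sum_congr rfl (fun j _ => ?_)
          rw [Finset.sum_ite, Finset.sum_const, Finset.sum_const]
          simp
      _ = ∑ i ∈ Finset.range t, ∑ j : Fin (lam 0), (if (j : ℕ) < lam i then 1 else 0) :=
          Finset.sum_comm
      _ = ∑ i ∈ Finset.range t, lam i := by
          refine Finset.sum_congr rfl (fun i _ => ?_)
          rw [Fin.sum_univ_eq_sum_range (fun jj => if jj < lam i then 1 else 0) (lam 0)]
          exact GR.sum_ite_range (lam 0) (lam i) (hlam (Nat.zero_le _))
end

section
/- Suppose A is an r × s matrix with entries in {0,1}, S is a subset of the columns of A such that the vector of row sums of the submatrix of columns in S is weakly decreasing, and the vector of row sums of the submatrix of the complementary columns is also weakly decreasing. Let μ be the row-sum vector of A, λ' the column-sum vector of A, and assume λ' is the conjugate of a partition λ with λ ≥_Dom μ. Then, letting μ• be the row sums over S, λ• the partition whose conjugate has parts {λ'_j : j ∈ S}, and (λ°, μ°) the complementary data, we have λ• ≥_Dom μ• and λ° ≥_Dom μ°, and (λ,μ) = (λ•+λ°, μ•+μ°). -/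
/-- splitting the columns of a `{0,1}`-matrix into two groups, each with weakly
decreasing row-sum vector, yields a decomposition in the Kostka semigroup. Here
`mu` is the row-sum vector of `A`, the column sums of `A` are weakly decreasing (so they
form the conjugate `lam'` of the partition `lam`, where `lam i = #{j : i < colsum j}`), and
`lam` dominates `mu`. `muS`/`muC` are the row sums over `S` and its complement, and
`lamS`/`lamC` are the partitions whose conjugates have parts the column sums over `S` and
its complement. -/
theorem stmt5 (r s : ℕ) (A : Fin r → Fin s → ℕ) (hA : ∀ i j, A i j ≤ 1)
    (S : Finset (Fin s))
    (mu muS muC lam lamS lamC : ℕ → ℕ)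
    (hmu : ∀ i : Fin r, mu i.val = ∑ j, A i j) (hmu0 : ∀ i, r ≤ i → mu i = 0)
    (hmuS : ∀ i : Fin r, muS i.val = ∑ j ∈ S, A i j) (hmuS0 : ∀ i, r ≤ i → muS i = 0)
    (hmuC : ∀ i : Fin r, muC i.val = ∑ j ∈ Sᶜ, A i j) (hmuC0 : ∀ i, r ≤ i → muC i = 0)
    (hSdec : Antitone muS) (hCdec : Antitone muC)
    (hcolsorted : ∀ j k : Fin s, j ≤ k → ∑ i, A i k ≤ ∑ i, A i j)
    (hlam : ∀ i, lam i = ((Finset.univ : Finset (Fin s)).filter fun j => i < ∑ x, A x j).card)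
    (hlamS : ∀ i, lamS i = (S.filter fun j => i < ∑ x, A x j).card)
    (hlamC : ∀ i, lamC i = (Sᶜ.filter fun j => i < ∑ x, A x j).card)
    (hdom : ∀ t, t ≤ r → ∑ i ∈ Finset.range t, mu i ≤ ∑ i ∈ Finset.range t, lam i) :
    (∀ t, t ≤ r → ∑ i ∈ Finset.range t, muS i ≤ ∑ i ∈ Finset.range t, lamS i) ∧
    (∑ i ∈ Finset.range r, lamS i = ∑ i ∈ Finset.range r, muS i) ∧
    (∀ t, t ≤ r → ∑ i ∈ Finset.range t, muC i ≤ ∑ i ∈ Finset.range t, lamC i) ∧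
    (∑ i ∈ Finset.range r, lamC i = ∑ i ∈ Finset.range r, muC i) ∧
    (∀ i, lam i = lamS i + lamC i) ∧ (∀ i, mu i = muS i + muC i) := by
  classical
  set c : Fin s → ℕ := fun j => ∑ x, A x j with hc
  set B : ℕ → Fin s → ℕ := fun i j => if h : i < r then A ⟨i, h⟩ j else 0 with hB
  have hBle : ∀ i j, B i j ≤ 1 := by
    intro i j; simp only [hB]; split
    · exact hA _ j
    · exact Nat.zero_le 1
  have hBr : ∀ j, ∑ i ∈ Finset.range r, B i j = c j := by
    intro j
    rw [← Fin.sum_univ_eq_sum_range (fun i => B i j)]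
    exact Finset.sum_congr rfl fun i _ => by simp [hB, i.isLt]
  have hcr : ∀ j, c j ≤ r := by
    intro j
    calc c j ≤ ∑ _x : Fin r, 1 := Finset.sum_le_sum fun i _ => hA i j
      _ = r := by simp
  have key : ∀ (T : Finset (Fin s)) (m mT : ℕ → ℕ),
      (∀ i : Fin r, mT i.val = ∑ j ∈ T, A i j) → (∀ i, r ≤ i → mT i = 0) →
      (∀ i, m i = (T.filter fun j => i < c j).card) →
      (∀ t, t ≤ r → ∑ i ∈ Finset.range t, mT i ≤ ∑ i ∈ Finset.range t, m i) ∧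
      (∑ i ∈ Finset.range r, m i = ∑ i ∈ Finset.range r, mT i) := by
    intro T m mT hmT hmT0 hm
    have hmTB : ∀ i, mT i = ∑ j ∈ T, B i j := by
      intro i
      by_cases h : i < r
      · rw [show i = (⟨i, h⟩ : Fin r).val from rfl, hmT]
        exact Finset.sum_congr rfl fun j _ => by simp [hB, h]
      · rw [hmT0 i (le_of_not_gt h)]
        symm; apply Finset.sum_eq_zero; intro j _; simp [hB, h]
    have hmsum : ∀ t, ∑ i ∈ Finset.range t, m i = ∑ j ∈ T, min t (c j) := by
      intro t
      calc ∑ i ∈ Finset.range t, m i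
          = ∑ i ∈ Finset.range t, ∑ j ∈ T, (if i < c j then 1 else 0) := by
            refine Finset.sum_congr rfl fun i _ => ?_
            rw [hm, Finset.card_filter]
        _ = ∑ j ∈ T, ∑ i ∈ Finset.range t, (if i < c j then 1 else 0) := Finset.sum_comm
        _ = ∑ j ∈ T, min t (c j) := by
            refine Finset.sum_congr rfl fun j _ => ?_
            rw [← Finset.card_filter]
            have : (Finset.range t).filter (fun i => i < c j) = Finset.range (min t (c j)) := by
              ext i
              simp only [Finset.mem_filter, Finset.mem_range, lt_min_iff]
            rw [this, Finset.card_range]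
    have hmTsum : ∀ t, ∑ i ∈ Finset.range t, mT i = ∑ j ∈ T, ∑ i ∈ Finset.range t, B i j := by
      intro t
      rw [← Finset.sum_comm]
      exact Finset.sum_congr rfl fun i _ => hmTB i
    constructor
    · intro t ht
      rw [hmsum, hmTsum]
      refine Finset.sum_le_sum fun j _ => le_min ?_ ?_
      · calc ∑ i ∈ Finset.range t, B i j ≤ ∑ _i ∈ Finset.range t, 1 :=
            Finset.sum_le_sum fun i _ => hBle i j
          _ = t := by simp
      · calc ∑ i ∈ Finset.range t, B i j ≤ ∑ i ∈ Finset.range r, B i j :=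
            Finset.sum_le_sum_of_subset (Finset.range_subset_range.2 ht)
          _ = c j := hBr j
    · rw [hmsum, hmTsum]
      refine Finset.sum_congr rfl fun j _ => ?_
      rw [hBr j, min_eq_right (hcr j)]
  obtain ⟨h1, h2⟩ := key S lamS muS hmuS hmuS0 hlamS
  obtain ⟨h3, h4⟩ := key Sᶜ lamC muC hmuC hmuC0 hlamC
  refine ⟨h1, h2, h3, h4, ?_, ?_⟩
  · intro i
    rw [hlam, hlamS, hlamC, ← Finset.card_union_of_disjoint
      (Finset.disjoint_filter_filter disjoint_compl_right), ← Finset.filter_union,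
      Finset.union_compl]
  · intro i
    by_cases h : i < r
    · rw [show i = (⟨i, h⟩ : Fin r).val from rfl, hmu, hmuS, hmuC,
        Finset.sum_add_sum_compl]
    · rw [hmu0 i (le_of_not_gt h), hmuS0 i (le_of_not_gt h), hmuC0 i (le_of_not_gt h)]
end

section
/- Let a, b, ℓ be integers with r ≥ a+ℓ ≥ a ≥ b > 0. Then the pair (λ, μ) with λ = (a repeated b+ℓ times, then zeros) and μ = (a repeated ℓ times, then b repeated a times, then zeros), as an element of the Kostka cone Kostka_r, is extremal: whenever (λ,μ) = (λ¹,μ¹) + (λ²,μ²) with both summands in Kostka_r, the two summands are parallel (each is a nonnegative scalar multiple of (λ,μ)). -/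
/-- Membership in the Kostka cone `Kostka_r ⊆ ℝ^{2r}`. -/
def InKostkaCone (r : ℕ) (lam mu : Fin r → ℝ) : Prop :=
  (∀ i j : Fin r, i ≤ j → lam j ≤ lam i) ∧
  (∀ i j : Fin r, i ≤ j → mu j ≤ mu i) ∧
  (∀ i, 0 ≤ lam i) ∧ (∀ i, 0 ≤ mu i) ∧
  (∀ t, 1 ≤ t → t ≤ r - 1 →
    (∑ i : Fin r, if (i : ℕ) < t then mu i else 0) ≤
      ∑ i : Fin r, if (i : ℕ) < t then lam i else 0) ∧
  (∑ i, lam i = ∑ i, mu i)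

private lemma ind_sum (r k : ℕ) (hk : k ≤ r) (e : ℝ) :
    (∑ i : Fin r, if (i : ℕ) < k then e else 0) = k * e := by
  have h : (Finset.range r).filter (fun i => i < k) = Finset.range k := by
    ext i; simp only [Finset.mem_filter, Finset.mem_range]; omega
  rw [Fin.sum_univ_eq_sum_range (fun i => if i < k then e else 0), ← Finset.sum_filter, h,
    Finset.sum_const, Finset.card_range, nsmul_eq_mul]

private lemma sum_ite_const {r : ℕ} (k : ℕ) (hk : k ≤ r) (v : Fin r → ℝ) (c : ℝ)
    (h : ∀ i : Fin r, (i : ℕ) < k → v i = c) :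
    (∑ i : Fin r, if (i : ℕ) < k then v i else 0) = k * c := by
  rw [show (∑ i : Fin r, if (i : ℕ) < k then v i else 0)
      = ∑ i : Fin r, if (i : ℕ) < k then c else 0 from
    Finset.sum_congr rfl fun i _ => by split_ifs with hi; exacts [h i hi, rfl]]
  exact ind_sum r k hk c

private lemma sum_blocks {r : ℕ} (k m : ℕ) (hk : k ≤ m) (hm : m ≤ r)
    (v : Fin r → ℝ) (c d : ℝ)
    (h1 : ∀ i : Fin r, (i : ℕ) < k → v i = c)
    (h2 : ∀ i : Fin r, k ≤ (i : ℕ) → (i : ℕ) < m → v i = d)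
    (h3 : ∀ i : Fin r, m ≤ (i : ℕ) → v i = 0) :
    (∑ i : Fin r, v i) = k * c + m * d - k * d := by
  have id : ∀ i : Fin r, v i =
      (if (i : ℕ) < k then c else 0) + (if (i : ℕ) < m then d else 0)
        - (if (i : ℕ) < k then d else 0) := by
    intro i
    by_cases hp : (i : ℕ) < k
    · have hq : (i : ℕ) < m := lt_of_lt_of_le hp hk
      rw [h1 i hp, if_pos hp, if_pos hq, if_pos hp]; ring
    · by_cases hq : (i : ℕ) < m
      · rw [h2 i (le_of_not_gt hp) hq, if_neg hp, if_pos hq, if_neg hp]; ring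
      · rw [h3 i (le_of_not_gt hq), if_neg hp, if_neg hq, if_neg hp]; ring
  rw [Finset.sum_congr rfl fun i _ => id i, Finset.sum_sub_distrib, Finset.sum_add_distrib,
    ind_sum r k (le_trans hk hm) c, ind_sum r m hm d, ind_sum r k (le_trans hk hm) d]

private lemma key (r a b ℓ : ℕ) (hb : 0 < b) (hba : b ≤ a) (har : a + ℓ ≤ r)
    (lam mu : Fin r → ℝ)
    (hlam : ∀ i : Fin r, lam i = if (i : ℕ) < b + ℓ then (a : ℝ) else 0)
    (hmu : ∀ i : Fin r, mu i =
      if (i : ℕ) < ℓ then (a : ℝ) else if (i : ℕ) < ℓ + a then (b : ℝ) else 0)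
    (l1 m1 l2 m2 : Fin r → ℝ) (h1 : InKostkaCone r l1 m1) (h2 : InKostkaCone r l2 m2)
    (hl : lam = l1 + l2) (hm : mu = m1 + m2) :
    ∃ c : ℝ, 0 ≤ c ∧ l1 = c • lam ∧ m1 = c • mu := by
  obtain ⟨L1mono, M1mono, L1pos, M1pos, P1ineq, S1⟩ := h1
  obtain ⟨L2mono, M2mono, L2pos, M2pos, P2ineq, S2⟩ := h2
  have ha : 0 < a := lt_of_lt_of_le hb hba
  have hr : 0 < r := by omega
  have hblr : b + ℓ ≤ r := by omega
  have hlar : ℓ + a ≤ r := by omega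
  have hℓr : ℓ < r := by omega
  have hladd : ∀ i : Fin r, lam i = l1 i + l2 i := fun i => by rw [hl]; rfl
  have hmadd : ∀ i : Fin r, mu i = m1 i + m2 i := fun i => by rw [hm]; rfl
  set x := l1 ⟨0, hr⟩ with hxdef
  set z := m1 ⟨ℓ, hℓr⟩ with hzdef
  have haR : (a : ℝ) ≠ 0 := Nat.cast_ne_zero.mpr ha.ne'
  -- l1 is constant x on [0, b+ℓ)
  have Hl1 : ∀ i : Fin r, (i : ℕ) < b + ℓ → l1 i = x := by
    intro i hi
    have h0i : (⟨0, hr⟩ : Fin r) ≤ i := by simp [Fin.le_def]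
    have e1 : lam i = (a : ℝ) := by rw [hlam i, if_pos hi]
    have e0 : lam ⟨0, hr⟩ = (a : ℝ) := by rw [hlam _, if_pos (by simpa using by omega : (0 : ℕ) < b + ℓ)]
    have m1' := L1mono _ _ h0i
    have m2' := L2mono _ _ h0i
    have q1 := hladd i
    have q0 := hladd ⟨0, hr⟩
    rw [e1] at q1; rw [e0] at q0
    linarith
  -- l1 vanishes on [b+ℓ, r)
  have Hl0 : ∀ i : Fin r, b + ℓ ≤ (i : ℕ) → l1 i = 0 := by
    intro i hi
    have e1 : lam i = 0 := by rw [hlam i, if_neg (by omega)]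
    have := hladd i
    have := L1pos i; have := L2pos i
    linarith
  -- m1 is constant z on [ℓ, ℓ+a)
  have Hm2 : ∀ i : Fin r, ℓ ≤ (i : ℕ) → (i : ℕ) < ℓ + a → m1 i = z := by
    intro i hℓi hi
    have h0i : (⟨ℓ, hℓr⟩ : Fin r) ≤ i := by simpa [Fin.le_def] using hℓi
    have e1 : mu i = (b : ℝ) := by rw [hmu i, if_neg (by omega), if_pos hi]
    have e0 : mu ⟨ℓ, hℓr⟩ = (b : ℝ) := by
      rw [hmu _, if_neg (by simp), if_pos (by simpa using by omega : ℓ < ℓ + a)]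
    have m1' := M1mono _ _ h0i
    have m2' := M2mono _ _ h0i
    have q1 := hmadd i
    have q0 := hmadd ⟨ℓ, hℓr⟩
    rw [e1] at q1; rw [e0] at q0
    linarith
  -- m1 vanishes on [ℓ+a, r)
  have Hm0 : ∀ i : Fin r, ℓ + a ≤ (i : ℕ) → m1 i = 0 := by
    intro i hi
    have e1 : mu i = 0 := by rw [hmu i, if_neg (by omega), if_neg (by omega)]
    have := hmadd i
    have := M1pos i; have := M2pos i
    linarith
  -- m1 is constant x on [0, ℓ)
  have Hm1 : ∀ i : Fin r, (i : ℕ) < ℓ → m1 i = x := by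
    intro i hi
    have hℓ0 : 0 < ℓ := by omega
    set y := m1 ⟨0, hr⟩ with hydef
    have Hy : ∀ j : Fin r, (j : ℕ) < ℓ → m1 j = y := by
      intro j hj
      have h0j : (⟨0, hr⟩ : Fin r) ≤ j := by simp [Fin.le_def]
      have e1 : mu j = (a : ℝ) := by rw [hmu j, if_pos hj]
      have e0 : mu ⟨0, hr⟩ = (a : ℝ) := by rw [hmu _, if_pos (by simpa using hℓ0)]
      have m1' := M1mono _ _ h0j
      have m2' := M2mono _ _ h0j
      have q1 := hmadd j
      have q0 := hmadd ⟨0, hr⟩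
      rw [e1] at q1; rw [e0] at q0
      linarith
    have Hy2 : ∀ j : Fin r, (j : ℕ) < ℓ → m2 j = (a : ℝ) - y := by
      intro j hj
      have e1 : mu j = (a : ℝ) := by rw [hmu j, if_pos hj]
      have := hmadd j
      rw [Hy j hj] at this
      linarith [this, e1]
    have Hx2 : ∀ j : Fin r, (j : ℕ) < ℓ → l2 j = (a : ℝ) - x := by
      intro j hj
      have e1 : lam j = (a : ℝ) := by rw [hlam j, if_pos (by omega)]
      have := hladd j
      rw [Hl1 j (by omega)] at this
      linarith [this, e1]
    have P1 := P1ineq ℓ hℓ0 (by omega)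
    have P2 := P2ineq ℓ hℓ0 (by omega)
    rw [sum_ite_const ℓ (le_of_lt hℓr) m1 y Hy,
      sum_ite_const ℓ (le_of_lt hℓr) l1 x (fun j hj => Hl1 j (by omega))] at P1
    rw [sum_ite_const ℓ (le_of_lt hℓr) m2 ((a : ℝ) - y) Hy2,
      sum_ite_const ℓ (le_of_lt hℓr) l2 ((a : ℝ) - x) Hx2] at P2
    have hℓR : (0 : ℝ) < (ℓ : ℝ) := by exact_mod_cast hℓ0
    have hyx : y ≤ x := le_of_mul_le_mul_left P1 hℓR
    have hxy : (a : ℝ) - y ≤ (a : ℝ) - x := le_of_mul_le_mul_left P2 hℓR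
    have : y = x := le_antisymm hyx (by linarith)
    rw [Hy i hi, this]
  -- total sums
  rw [sum_blocks (b + ℓ) (b + ℓ) le_rfl hblr l1 x 0 Hl1 (fun i h1 h2 => by omega) Hl0,
    sum_blocks ℓ (ℓ + a) (by omega) hlar m1 x z Hm1 Hm2 Hm0] at S1
  push_cast at S1
  have haz : (a : ℝ) * z = (b : ℝ) * x := by linear_combination -S1
  refine ⟨x / a, div_nonneg (L1pos _) (Nat.cast_nonneg a), funext fun i => ?_,
    funext fun i => ?_⟩
  · show l1 i = (x / a) * lam i
    by_cases hi : (i : ℕ) < b + ℓ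
    · rw [Hl1 i hi, hlam i, if_pos hi]; field_simp
    · rw [Hl0 i (le_of_not_gt hi), hlam i, if_neg hi]; ring
  · show m1 i = (x / a) * mu i
    by_cases hi : (i : ℕ) < ℓ
    · rw [Hm1 i hi, hmu i, if_pos hi]; field_simp
    · by_cases hi' : (i : ℕ) < ℓ + a
      · rw [Hm2 i (le_of_not_gt hi) hi', hmu i, if_neg hi, if_pos hi']
        field_simp
        linear_combination haz
      · rw [Hm0 i (le_of_not_gt hi'), hmu i, if_neg hi, if_neg hi']; ring

/-- for integers `r ≥ a + ℓ ≥ a ≥ b > 0`, the pair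
`(a^{b+ℓ}, a^ℓ b^a)` is extremal in the Kostka cone: any decomposition into two cone
elements has both summands nonnegative multiples of it. -/
theorem stmt6 (r a b ℓ : ℕ) (hb : 0 < b) (hba : b ≤ a) (har : a + ℓ ≤ r)
    (lam mu : Fin r → ℝ)
    (hlam : ∀ i : Fin r, lam i = if (i : ℕ) < b + ℓ then (a : ℝ) else 0)
    (hmu : ∀ i : Fin r, mu i =
      if (i : ℕ) < ℓ then (a : ℝ) else if (i : ℕ) < ℓ + a then (b : ℝ) else 0) :
    ∀ l1 m1 l2 m2 : Fin r → ℝ, InKostkaCone r l1 m1 → InKostkaCone r l2 m2 →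
      lam = l1 + l2 → mu = m1 + m2 →
      (∃ c : ℝ, 0 ≤ c ∧ l1 = c • lam ∧ m1 = c • mu) ∧
      (∃ c : ℝ, 0 ≤ c ∧ l2 = c • lam ∧ m2 = c • mu) := by
  intro l1 m1 l2 m2 h1 h2 hl hm
  exact ⟨key r a b ℓ hb hba har lam mu hlam hmu l1 m1 l2 m2 h1 h2 hl hm,
    key r a b ℓ hb hba har lam mu hlam hmu l2 m2 l1 m1 h2 h1
      (by rw [hl, add_comm]) (by rw [hm, add_comm])⟩
end

section
/- If (λ,μ) lies on an extremal ray of the Kostka cone Kostka_r and all dominance inequalities Σ_{i≤t} λ_i ≥ Σ_{i≤t} μ_i are strict for 1 ≤ t < r, then (λ,μ) is a positive real multiple of (a^b, b^a) for suitable integers r ≥ a ≥ b > 0, where a is the number of nonzero parts of μ, b the number of nonzero parts of λ, and a^b denotes the rectangular partition with b parts equal to a. -/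
lemma lower_mem_iff {r : ℕ} (S : Finset (Fin r))
    (h : ∀ i j : Fin r, j ≤ i → i ∈ S → j ∈ S) (i : Fin r) :
    i ∈ S ↔ (i : ℕ) < S.card := by
  constructor
  · intro hi
    have hsub : Finset.Iic i ⊆ S := fun j hj => h i j (Finset.mem_Iic.mp hj) hi
    have := Finset.card_le_card hsub
    rw [Fin.card_Iic] at this
    omega
  · intro hi
    by_contra hns
    have hsub : S ⊆ Finset.Iio i := by
      intro j hj
      rw [Finset.mem_Iio]
      by_contra hji
      exact hns (h j i (le_of_not_gt hji) hj)
    have := Finset.card_le_card hsub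
    rw [Fin.card_Iio] at this
    omega

lemma psum_split {r t : ℕ} (f g : Fin r → ℝ) :
    (∑ i : Fin r, if (i:ℕ) < t then f i + g i else 0)
      = (∑ i : Fin r, if (i:ℕ) < t then f i else 0)
        + ∑ i : Fin r, if (i:ℕ) < t then g i else 0 := by
  rw [← Finset.sum_add_distrib]
  exact Finset.sum_congr rfl fun i _ => by split <;> simp

lemma psum_smul {r t : ℕ} (f : Fin r → ℝ) (c : ℝ) :
    (∑ i : Fin r, if (i:ℕ) < t then c * f i else 0)
      = c * ∑ i : Fin r, if (i:ℕ) < t then f i else 0 := by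
  rw [Finset.mul_sum]
  exact Finset.sum_congr rfl fun i _ => by split <;> simp

lemma abs_psum_le {r t : ℕ} {f : Fin r → ℝ} {C : ℝ} (hC0 : 0 ≤ C) (hC : ∀ i, |f i| ≤ C) :
    |∑ i : Fin r, if (i:ℕ) < t then f i else 0| ≤ r * C := by
  calc |∑ i : Fin r, if (i:ℕ) < t then f i else 0|
      ≤ ∑ i : Fin r, |if (i:ℕ) < t then f i else 0| := Finset.abs_sum_le_sum_abs _ _
    _ ≤ ∑ _i : Fin r, C := by
        refine Finset.sum_le_sum fun i _ => ?_
        split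
        · exact hC i
        · simpa using hC0
    _ = r * C := by rw [Finset.sum_const, Finset.card_univ, Fintype.card_fin, nsmul_eq_mul]

lemma sum_if_lt_const {r : ℕ} (k : ℕ) (c : ℝ) (hk : k ≤ r) :
    (∑ i : Fin r, if (i:ℕ) < k then c else 0) = k * c := by
  rw [Fin.sum_univ_eq_sum_range (fun j => if j < k then c else 0) r, ← Finset.sum_filter]
  have h : (Finset.range r).filter (· < k) = Finset.range k := by
    ext x; simp only [Finset.mem_filter, Finset.mem_range]; omega
  rw [h, Finset.sum_const, Finset.card_range, nsmul_eq_mul]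

lemma psum_all {r : ℕ} (f : Fin r → ℝ) {t : ℕ} (ht : r ≤ t) :
    (∑ i : Fin r, if (i:ℕ) < t then f i else 0) = ∑ i, f i :=
  Finset.sum_congr rfl fun i _ => by rw [if_pos (lt_of_lt_of_le i.isLt ht)]

lemma cone_half {r : ℕ} {l m : Fin r → ℝ} (h : InKostkaCone r l m) :
    InKostkaCone r (fun i => l i / 2) (fun i => m i / 2) := by
  obtain ⟨h1, h2, h3, h4, h5, h6⟩ := h
  refine ⟨fun i j hij => by linarith [h1 i j hij],
    fun i j hij => by linarith [h2 i j hij],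
    fun i => by linarith [h3 i], fun i => by linarith [h4 i], ?_, ?_⟩
  · intro t ht1 ht2
    have e1 : ∀ f : Fin r → ℝ, (∑ i : Fin r, if (i:ℕ) < t then f i / 2 else 0)
        = (∑ i : Fin r, if (i:ℕ) < t then f i else 0) / 2 := by
      intro f
      rw [Finset.sum_div]
      exact Finset.sum_congr rfl fun i _ => by split <;> simp
    rw [e1, e1]
    linarith [h5 t ht1 ht2]
  · rw [← Finset.sum_div, ← Finset.sum_div, h6]

set_option maxHeartbeats 4000000 in
/-- if a nonzero `(lam, mu)` in the Kostka cone is extremal (every decomposition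
into two cone elements has summands that are nonnegative multiples of `(lam, mu)`) and all
dominance inequalities for `1 ≤ t < r` are strict, then, with `b` the number of nonzero parts
of `lam` and `a` the number of nonzero parts of `mu`, we have `r ≥ a ≥ b > 0` and `(lam, mu)`
is a positive multiple of `(a^b, b^a)`. -/
theorem stmt7 (r : ℕ) (lam mu : Fin r → ℝ)
    (hK : InKostkaCone r lam mu) (hne : lam ≠ 0)
    (hext : ∀ l1 m1 l2 m2 : Fin r → ℝ, InKostkaCone r l1 m1 → InKostkaCone r l2 m2 →
      lam = l1 + l2 → mu = m1 + m2 →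
      (∃ c : ℝ, 0 ≤ c ∧ l1 = c • lam ∧ m1 = c • mu) ∧
      (∃ c : ℝ, 0 ≤ c ∧ l2 = c • lam ∧ m2 = c • mu))
    (hstrict : ∀ t, 1 ≤ t → t < r →
      (∑ i : Fin r, if (i : ℕ) < t then mu i else 0) <
        ∑ i : Fin r, if (i : ℕ) < t then lam i else 0) :
    ∃ q : ℝ, 0 < q ∧
      0 < (Finset.univ.filter fun i : Fin r => lam i ≠ 0).card ∧
      (Finset.univ.filter fun i : Fin r => lam i ≠ 0).card ≤
        (Finset.univ.filter fun i : Fin r => mu i ≠ 0).card ∧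
      (Finset.univ.filter fun i : Fin r => mu i ≠ 0).card ≤ r ∧
      (∀ i : Fin r, lam i =
        if (i : ℕ) < (Finset.univ.filter fun i : Fin r => lam i ≠ 0).card then
          q * ((Finset.univ.filter fun i : Fin r => mu i ≠ 0).card : ℝ) else 0) ∧
      (∀ i : Fin r, mu i =
        if (i : ℕ) < (Finset.univ.filter fun i : Fin r => mu i ≠ 0).card then
          q * ((Finset.univ.filter fun i : Fin r => lam i ≠ 0).card : ℝ) else 0) := by
  obtain ⟨h1, h2, h3, h4, h5, h6⟩ := hK
  -- r ≥ 1
  have hr : 0 < r := by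
    by_contra h
    push_neg at h
    have hr0 : r = 0 := by omega
    subst hr0
    exact hne (funext fun i => i.elim0)
  set z : Fin r := ⟨0, hr⟩ with hz
  obtain ⟨i0, hi0⟩ : ∃ i, lam i ≠ 0 := Function.ne_iff.mp hne
  have hi0pos : 0 < lam i0 := lt_of_le_of_ne (h3 i0) (Ne.symm hi0)
  have hlam0 : 0 < lam z := lt_of_lt_of_le hi0pos (h1 z i0 (by rw [Fin.le_def]; exact Nat.zero_le _))
  have hsumpos : 0 < ∑ i, lam i :=
    Finset.sum_pos' (fun i _ => h3 i) ⟨i0, Finset.mem_univ _, hi0pos⟩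
  -- Step 1 : μ has full support
  have hmupos : ∀ i, 0 < mu i := by
    intro j
    by_contra hj
    push_neg at hj
    have hj0 : mu j = 0 := le_antisymm hj (h4 j)
    rcases Nat.eq_zero_or_pos (j : ℕ) with hj1 | hj1
    · have hall : ∀ i, mu i = 0 := by
        intro i
        have hle : j ≤ i := by rw [Fin.le_def]; omega
        have := h2 j i hle
        have := h4 i
        linarith
      have hz0 : ∑ i, mu i = 0 := Finset.sum_eq_zero fun i _ => hall i
      rw [h6, hz0] at hsumpos
      exact lt_irrefl _ hsumpos
    · have hst := hstrict (j : ℕ) hj1 j.isLt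
      have e1 : (∑ i : Fin r, if (i:ℕ) < (j:ℕ) then mu i else 0) = ∑ i, mu i := by
        refine Finset.sum_congr rfl fun i _ => ?_
        split_ifs with h
        · rfl
        · have hle : j ≤ i := by rw [Fin.le_def]; omega
          have := h2 j i hle
          have := h4 i
          linarith
      have e2 : (∑ i : Fin r, if (i:ℕ) < (j:ℕ) then lam i else 0) ≤ ∑ i, lam i := by
        refine Finset.sum_le_sum fun i _ => ?_
        split_ifs with h
        · exact le_refl _
        · exact h3 i
      rw [e1] at hst
      linarith
  -- support structure of lam
  set B : Finset (Fin r) := Finset.univ.filter (fun i : Fin r => lam i ≠ 0) with hB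
  set b : ℕ := B.card with hbdef
  have hBmem : ∀ i : Fin r, lam i ≠ 0 ↔ (i : ℕ) < b := by
    intro i
    rw [← lower_mem_iff B (fun i j hji hi => ?_) i]
    · simp [hB]
    · rw [hB, Finset.mem_filter] at hi ⊢
      refine ⟨Finset.mem_univ _, ?_⟩
      have : 0 < lam i := lt_of_le_of_ne (h3 i) (Ne.symm hi.2)
      have := h1 j i hji
      intro h0; rw [h0] at this; linarith
  have hbpos : 0 < b := by
    have := (hBmem i0).mp hi0; omega
  have hbr0 : b ≤ r := by
    rw [hbdef, hB]
    exact (Finset.card_filter_le _ _).trans (by simp)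
  have hbr : b ≤ r := hbr0
  clear_value B b
  -- rigidity lemmas
  have rigMu : ∀ w : Fin r → ℝ, InKostkaCone r lam (fun i => mu i + w i) →
      InKostkaCone r lam (fun i => mu i - w i) → w = 0 := by
    intro w hp hm
    obtain ⟨⟨c, hc0, hcl, hcm⟩, -⟩ := hext (fun i => lam i / 2) (fun i => (mu i + w i) / 2)
      (fun i => lam i / 2) (fun i => (mu i - w i) / 2) (cone_half hp) (cone_half hm)
      (funext fun i => by simp only [Pi.add_apply]; ring)
      (funext fun i => by simp only [Pi.add_apply]; ring)
    have h' := congrFun hcl i0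
    simp only [Pi.smul_apply, smul_eq_mul] at h'
    have h'' : (c - 1/2) * lam i0 = 0 := by linear_combination -h'
    have hc : c = 1/2 := by
      rcases mul_eq_zero.mp h'' with h | h
      · linarith
      · exact absurd h hi0
    funext i
    have h3' := congrFun hcm i
    simp only [Pi.smul_apply, smul_eq_mul, hc] at h3'
    simp only [Pi.zero_apply]
    linarith
  have rigLam : ∀ v : Fin r → ℝ, (∑ i, v i = 0) →
      InKostkaCone r (fun i => lam i + v i) mu →
      InKostkaCone r (fun i => lam i - v i) mu → v = 0 := by
    intro v hsv hp hm
    obtain ⟨⟨c, hc0, hcl, hcm⟩, -⟩ := hext (fun i => (lam i + v i) / 2) (fun i => mu i / 2)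
      (fun i => (lam i - v i) / 2) (fun i => mu i / 2) (cone_half hp) (cone_half hm)
      (funext fun i => by simp only [Pi.add_apply]; ring)
      (funext fun i => by simp only [Pi.add_apply]; ring)
    have hsum' : ∑ i, (lam i + v i) / 2 = ∑ i, c * lam i := by
      refine Finset.sum_congr rfl fun i _ => ?_
      have := congrFun hcl i
      simpa [smul_eq_mul] using this
    have hL : ((∑ i, lam i) + ∑ i, v i) / 2 = c * ∑ i, lam i := by
      calc ((∑ i, lam i) + ∑ i, v i) / 2 = ∑ i, (lam i + v i) / 2 := by
            rw [← Finset.sum_add_distrib, ← Finset.sum_div]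
        _ = ∑ i, c * lam i := hsum'
        _ = c * ∑ i, lam i := by rw [Finset.mul_sum]
    rw [hsv, add_zero] at hL
    have h'' : (c - 1/2) * (∑ i, lam i) = 0 := by linear_combination -hL
    have hc : c = 1/2 := by
      rcases mul_eq_zero.mp h'' with h | h
      · linarith
      · exact absurd h hsumpos.ne'
    funext i
    have h3' := congrFun hcl i
    simp only [Pi.smul_apply, smul_eq_mul, hc] at h3'
    simp only [Pi.zero_apply]
    linarith
  -- μ is constant
  have hmuconst : ∀ i, mu i = mu z := by
    by_contra hcon
    push_neg at hcon
    obtain ⟨j, hjne⟩ := hcon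
    set S : Finset (Fin r) := Finset.univ.filter (fun i : Fin r => mu i = mu z) with hS
    set k : ℕ := S.card with hk
    have hSmem : ∀ i : Fin r, mu i = mu z ↔ (i : ℕ) < k := by
      intro i
      rw [← lower_mem_iff S ?_ i]
      · simp [hS]
      · intro i' j' hji hi'
        rw [hS, Finset.mem_filter] at hi' ⊢
        refine ⟨Finset.mem_univ _, ?_⟩
        have hup := h2 j' i' hji
        have hdn := h2 z j' (by rw [Fin.le_def]; exact Nat.zero_le _)
        have := hi'.2
        linarith
    have hkpos : 0 < k := by have := (hSmem z).mp rfl; omega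
    have hkr : k < r := by
      have hkj : ¬ ((j:ℕ) < k) := fun h => hjne ((hSmem j).mpr h)
      have := j.isLt; omega
    clear_value S k
    have hkrR : (k:ℝ) ≤ (r:ℝ) := by exact_mod_cast hkr.le
    have hrR : (0:ℝ) < (r:ℝ) := by exact_mod_cast hr
    obtain ⟨G, hGpos, hGle⟩ : ∃ G : ℝ, 0 < G ∧ ∀ t, 1 ≤ t → t ≤ r - 1 →
        G ≤ (∑ i : Fin r, if (i:ℕ) < t then lam i else 0)
          - ∑ i : Fin r, if (i:ℕ) < t then mu i else 0 := by
      have hTne : (Finset.Icc 1 (r-1)).Nonempty := Finset.nonempty_Icc.mpr (by omega)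
      refine ⟨(Finset.Icc 1 (r-1)).inf' hTne (fun t =>
        (∑ i : Fin r, if (i:ℕ) < t then lam i else 0)
          - ∑ i : Fin r, if (i:ℕ) < t then mu i else 0), ?_, ?_⟩
      · rw [Finset.lt_inf'_iff]
        intro t ht
        rw [Finset.mem_Icc] at ht
        have := hstrict t ht.1 (by omega)
        linarith
      · intro t ht1 ht2
        exact Finset.inf'_le _ (Finset.mem_Icc.mpr ⟨ht1, ht2⟩)
    set v : Fin r → ℝ := fun i => (if (i:ℕ) < k then (r:ℝ) else 0) + (-(k:ℝ)) with hv
    have hvA : ∀ i : Fin r, (i:ℕ) < k → v i = (r:ℝ) - (k:ℝ) := by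
      intro i hi; simp only [hv, if_pos hi]; ring
    have hvB : ∀ i : Fin r, k ≤ (i:ℕ) → v i = -(k:ℝ) := by
      intro i hi; simp only [hv, if_neg (Nat.not_lt.mpr hi), zero_add]
    have hvabs : ∀ i, |v i| ≤ (r:ℝ) := by
      intro i
      rcases Nat.lt_or_ge (i:ℕ) k with h | h
      · rw [hvA i h, abs_of_nonneg (by linarith)]
        have : (0:ℝ) ≤ (k:ℝ) := by positivity
        linarith
      · rw [hvB i h, abs_neg, abs_of_nonneg (by positivity)]; exact hkrR
    have hsv : ∑ i, v i = 0 := by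
      simp only [hv]
      rw [Finset.sum_add_distrib, sum_if_lt_const k (r:ℝ) hkr.le, Finset.sum_const,
        Finset.card_univ, Fintype.card_fin, nsmul_eq_mul]
      ring
    clear_value v
    have hgap : 0 < mu z - mu ⟨k, hkr⟩ := by
      have ha : mu ⟨k,hkr⟩ ≤ mu z := h2 z ⟨k,hkr⟩ (by rw [Fin.le_def]; exact Nat.zero_le _)
      have hb : mu ⟨k,hkr⟩ ≠ mu z := fun h => absurd ((hSmem ⟨k,hkr⟩).mp h) (by simp)
      cases lt_or_eq_of_le ha with
      | inl h => linarith
      | inr h => exact absurd h hb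
    have hmpos : 0 < mu ⟨r-1, by omega⟩ := hmupos _
    have hmle : ∀ i : Fin r, mu ⟨r-1, by omega⟩ ≤ mu i := by
      intro i
      exact h2 i ⟨r-1, by omega⟩ (by rw [Fin.le_def]; have := i.isLt; simp; omega)
    obtain ⟨ε, hεpos, hε1, hε2, hε3⟩ : ∃ ε : ℝ, 0 < ε ∧ ε * r ≤ mu z - mu ⟨k, hkr⟩ ∧
        (∀ i : Fin r, ε * r ≤ mu i) ∧ ε * (r*r) ≤ G := by
      refine ⟨min (min ((mu z - mu ⟨k, hkr⟩) / r) (mu ⟨r-1, by omega⟩ / r)) (G / (r*r)),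
        ?_, ?_, ?_, ?_⟩
      · apply lt_min (lt_min ?_ ?_) ?_ <;> positivity
      · have h' : min (min ((mu z - mu ⟨k, hkr⟩) / r) (mu ⟨r-1, by omega⟩ / r)) (G / (r*r))
            ≤ (mu z - mu ⟨k,hkr⟩) / r := le_trans (min_le_left _ _) (min_le_left _ _)
        calc _ ≤ ((mu z - mu ⟨k,hkr⟩) / r) * r := by nlinarith
          _ = mu z - mu ⟨k,hkr⟩ := by field_simp
      · intro i
        have h' : min (min ((mu z - mu ⟨k, hkr⟩) / r) (mu ⟨r-1, by omega⟩ / r)) (G / (r*r))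
            ≤ mu ⟨r-1, by omega⟩ / r := le_trans (min_le_left _ _) (min_le_right _ _)
        calc _ ≤ (mu ⟨r-1, by omega⟩ / r) * r := by nlinarith
          _ = mu ⟨r-1, by omega⟩ := by field_simp
          _ ≤ mu i := hmle i
      · have h' : min (min ((mu z - mu ⟨k, hkr⟩) / r) (mu ⟨r-1, by omega⟩ / r)) (G / (r*r))
            ≤ G / (r*r) := min_le_right _ _
        calc _ ≤ (G / (r*r)) * (r*r) := by nlinarith
          _ = G := by field_simp
    have hdom : ∀ s : ℝ, |s| ≤ ε → ∀ t, 1 ≤ t → t ≤ r - 1 →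
        (∑ i : Fin r, if (i:ℕ) < t then mu i + s * v i else 0) ≤
          ∑ i : Fin r, if (i:ℕ) < t then lam i else 0 := by
      intro s hs t ht1 ht2
      rw [psum_split, psum_smul]
      have habs := abs_psum_le (r:=r) (t:=t) (le_of_lt hrR) hvabs
      have hG' := hGle t ht1 ht2
      have hkey : s * (∑ i : Fin r, if (i:ℕ) < t then v i else 0) ≤ ε * (r*r) := by
        calc s * (∑ i : Fin r, if (i:ℕ) < t then v i else 0)
            ≤ |s * (∑ i : Fin r, if (i:ℕ) < t then v i else 0)| := le_abs_self _
          _ = |s| * |∑ i : Fin r, if (i:ℕ) < t then v i else 0| := abs_mul _ _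
          _ ≤ ε * ((r:ℝ)*(r:ℝ)) := mul_le_mul hs habs (abs_nonneg _) (le_of_lt hεpos)
      linarith
    have hsum' : ∀ s : ℝ, ∑ i, (mu i + s * v i) = ∑ i, mu i := by
      intro s
      rw [Finset.sum_add_distrib, ← Finset.mul_sum, hsv, mul_zero, add_zero]
    have cone_pert : ∀ s : ℝ, |s| ≤ ε → InKostkaCone r lam (fun i => mu i + s * v i) := by
      intro s hs
      have hsle : s ≤ ε := le_trans (le_abs_self s) hs
      have hsge : -ε ≤ s := neg_le.mp (le_trans (neg_le_abs s) hs)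
      refine ⟨h1, ?_, h3, ?_, ?_, ?_⟩
      · intro i j' hij
        show mu j' + s * v j' ≤ mu i + s * v i
        have hij' : (i:ℕ) ≤ (j':ℕ) := hij
        have hmono := h2 i j' hij
        rcases Nat.lt_or_ge (j':ℕ) k with hjk | hjk
        · have hik : (i:ℕ) < k := by omega
          rw [hvA i hik, hvA j' hjk]
          linarith
        · rcases Nat.lt_or_ge (i:ℕ) k with hik | hik
          · rw [hvA i hik, hvB j' hjk]
            have hmi : mu i = mu z := (hSmem i).mpr hik
            have hmj : mu j' ≤ mu ⟨k, hkr⟩ := h2 ⟨k, hkr⟩ j' (by rw [Fin.le_def]; simpa using hjk)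
            nlinarith
          · rw [hvB i hik, hvB j' hjk]
            linarith
      · intro i
        show 0 ≤ mu i + s * v i
        have habs : |s * v i| ≤ ε * r := by
          rw [abs_mul]
          exact mul_le_mul hs (hvabs i) (abs_nonneg _) (le_of_lt hεpos)
        have hna := neg_abs_le (s * v i)
        have := hε2 i
        linarith
      · intro t ht1 ht2
        exact hdom s hs t ht1 ht2
      · show ∑ i, lam i = ∑ i, (mu i + s * v i)
        rw [hsum' s]
        exact h6
    have h0 := rigMu (fun i => ε * v i) (cone_pert ε (by rw [abs_of_pos hεpos]))
      (by
        have hneg := cone_pert (-ε) (by rw [abs_neg, abs_of_pos hεpos])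
        have heq : (fun i => mu i - ε * v i) = (fun i => mu i + (-ε) * v i) :=
          funext fun i => by ring
        rw [heq]
        exact hneg)
    have hz0 := congrFun h0 z
    simp only [Pi.zero_apply] at hz0
    rw [hvA z (by simp [hz]; omega)] at hz0
    have hpos' : (0:ℝ) < ε * ((r:ℝ) - (k:ℝ)) := by
      apply mul_pos hεpos
      have : (k:ℝ) < (r:ℝ) := by exact_mod_cast hkr
      linarith
    linarith
  -- λ is constant on its support
  have hlamconst : ∀ i : Fin r, (i : ℕ) < b → lam i = lam z := by
    by_contra hcon
    push_neg at hcon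
    obtain ⟨j, hjb, hjne⟩ := hcon
    set S : Finset (Fin r) := Finset.univ.filter (fun i : Fin r => lam i = lam z) with hS
    set k : ℕ := S.card with hk
    have hSmem : ∀ i : Fin r, lam i = lam z ↔ (i : ℕ) < k := by
      intro i
      rw [← lower_mem_iff S ?_ i]
      · simp [hS]
      · intro i' j' hji hi'
        rw [hS, Finset.mem_filter] at hi' ⊢
        refine ⟨Finset.mem_univ _, ?_⟩
        have hup := h1 j' i' hji
        have hdn := h1 z j' (by rw [Fin.le_def]; exact Nat.zero_le _)
        have := hi'.2
        linarith
    have hkpos : 0 < k := by have := (hSmem z).mp rfl; omega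
    have hkb : k < b := by
      have hkj : ¬ ((j:ℕ) < k) := fun h => hjne ((hSmem j).mpr h)
      omega
    clear_value S k
    have hkr : k < r := by omega
    have hbR : (0:ℝ) < (b:ℝ) := by exact_mod_cast hbpos
    have hkbR : (k:ℝ) ≤ (b:ℝ) := by exact_mod_cast hkb.le
    have hbrR : (b:ℝ) ≤ (r:ℝ) := by exact_mod_cast hbr
    have hrR : (0:ℝ) < (r:ℝ) := by exact_mod_cast hr
    obtain ⟨G, hGpos, hGle⟩ : ∃ G : ℝ, 0 < G ∧ ∀ t, 1 ≤ t → t ≤ r - 1 →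
        G ≤ (∑ i : Fin r, if (i:ℕ) < t then lam i else 0)
          - ∑ i : Fin r, if (i:ℕ) < t then mu i else 0 := by
      have hTne : (Finset.Icc 1 (r-1)).Nonempty := Finset.nonempty_Icc.mpr (by omega)
      refine ⟨(Finset.Icc 1 (r-1)).inf' hTne (fun t =>
        (∑ i : Fin r, if (i:ℕ) < t then lam i else 0)
          - ∑ i : Fin r, if (i:ℕ) < t then mu i else 0), ?_, ?_⟩
      · rw [Finset.lt_inf'_iff]
        intro t ht
        rw [Finset.mem_Icc] at ht
        have := hstrict t ht.1 (by omega)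
        linarith
      · intro t ht1 ht2
        exact Finset.inf'_le _ (Finset.mem_Icc.mpr ⟨ht1, ht2⟩)
    set v : Fin r → ℝ := fun i =>
      (if (i:ℕ) < k then (b:ℝ) else 0) + (if (i:ℕ) < b then -(k:ℝ) else 0) with hv
    have hvA : ∀ i : Fin r, (i:ℕ) < k → v i = (b:ℝ) - (k:ℝ) := by
      intro i hi
      simp only [hv, if_pos hi, if_pos (by omega : (i:ℕ) < b)]
      ring
    have hvB : ∀ i : Fin r, k ≤ (i:ℕ) → (i:ℕ) < b → v i = -(k:ℝ) := by
      intro i hi1 hi2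
      simp only [hv, if_neg (Nat.not_lt.mpr hi1), if_pos hi2, zero_add]
    have hvC : ∀ i : Fin r, b ≤ (i:ℕ) → v i = 0 := by
      intro i hi
      simp only [hv, if_neg (by omega : ¬ (i:ℕ) < k), if_neg (Nat.not_lt.mpr hi), add_zero]
    have hvabs : ∀ i, |v i| ≤ (r:ℝ) := by
      intro i
      have hkR0 : (0:ℝ) ≤ (k:ℝ) := by positivity
      rcases Nat.lt_or_ge (i:ℕ) k with h | h
      · rw [hvA i h, abs_of_nonneg (by linarith)]; linarith
      · rcases Nat.lt_or_ge (i:ℕ) b with h' | h'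
        · rw [hvB i h h', abs_neg, abs_of_nonneg hkR0]; linarith
        · rw [hvC i h', abs_zero]; linarith
    have hsv : ∑ i, v i = 0 := by
      simp only [hv]
      rw [Finset.sum_add_distrib, sum_if_lt_const k (b:ℝ) (by omega),
        sum_if_lt_const b (-(k:ℝ)) hbr]
      ring
    clear_value v
    have hgap : 0 < lam z - lam ⟨k, hkr⟩ := by
      have ha : lam ⟨k,hkr⟩ ≤ lam z := h1 z ⟨k,hkr⟩ (by rw [Fin.le_def]; exact Nat.zero_le _)
      have hb' : lam ⟨k,hkr⟩ ≠ lam z := fun h => absurd ((hSmem ⟨k,hkr⟩).mp h) (by simp)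
      cases lt_or_eq_of_le ha with
      | inl h => linarith
      | inr h => exact absurd h hb'
    have hlambpos : 0 < lam ⟨b-1, by omega⟩ := by
      have hne' : lam ⟨b-1, by omega⟩ ≠ 0 := (hBmem _).mpr (by simp; omega)
      exact lt_of_le_of_ne (h3 _) (Ne.symm hne')
    have hlamle : ∀ i : Fin r, (i:ℕ) < b → lam ⟨b-1, by omega⟩ ≤ lam i := by
      intro i hi
      exact h1 i ⟨b-1, by omega⟩ (by rw [Fin.le_def]; simp; omega)
    obtain ⟨ε, hεpos, hε1, hε2, hε3⟩ : ∃ ε : ℝ, 0 < ε ∧ ε * b ≤ lam z - lam ⟨k, hkr⟩ ∧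
        (∀ i : Fin r, (i:ℕ) < b → ε * b ≤ lam i) ∧ ε * (r*r) ≤ G := by
      refine ⟨min (min ((lam z - lam ⟨k, hkr⟩) / b) (lam ⟨b-1, by omega⟩ / b)) (G / (r*r)),
        ?_, ?_, ?_, ?_⟩
      · apply lt_min (lt_min ?_ ?_) ?_ <;> positivity
      · have h' : min (min ((lam z - lam ⟨k, hkr⟩) / b) (lam ⟨b-1, by omega⟩ / b)) (G / (r*r))
            ≤ (lam z - lam ⟨k,hkr⟩) / b := le_trans (min_le_left _ _) (min_le_left _ _)
        calc _ ≤ ((lam z - lam ⟨k,hkr⟩) / b) * b := by nlinarith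
          _ = lam z - lam ⟨k,hkr⟩ := by field_simp
      · intro i hi
        have h' : min (min ((lam z - lam ⟨k, hkr⟩) / b) (lam ⟨b-1, by omega⟩ / b)) (G / (r*r))
            ≤ lam ⟨b-1, by omega⟩ / b := le_trans (min_le_left _ _) (min_le_right _ _)
        calc _ ≤ (lam ⟨b-1, by omega⟩ / b) * b := by nlinarith
          _ = lam ⟨b-1, by omega⟩ := by field_simp
          _ ≤ lam i := hlamle i hi
      · have h' : min (min ((lam z - lam ⟨k, hkr⟩) / b) (lam ⟨b-1, by omega⟩ / b)) (G / (r*r))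
            ≤ G / (r*r) := min_le_right _ _
        calc _ ≤ (G / (r*r)) * (r*r) := by nlinarith
          _ = G := by field_simp
    have hdom : ∀ s : ℝ, |s| ≤ ε → ∀ t, 1 ≤ t → t ≤ r - 1 →
        (∑ i : Fin r, if (i:ℕ) < t then mu i else 0) ≤
          ∑ i : Fin r, if (i:ℕ) < t then lam i + s * v i else 0 := by
      intro s hs t ht1 ht2
      rw [psum_split, psum_smul]
      have habs := abs_psum_le (r:=r) (t:=t) (le_of_lt hrR) hvabs
      have hG' := hGle t ht1 ht2
      have hkey : -(ε * ((r:ℝ)*(r:ℝ))) ≤ s * (∑ i : Fin r, if (i:ℕ) < t then v i else 0) := by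
        have habs2 : |s * (∑ i : Fin r, if (i:ℕ) < t then v i else 0)| ≤ ε * ((r:ℝ)*(r:ℝ)) := by
          rw [abs_mul]
          exact mul_le_mul hs habs (abs_nonneg _) (le_of_lt hεpos)
        have := neg_abs_le (s * (∑ i : Fin r, if (i:ℕ) < t then v i else 0))
        linarith
      linarith
    have hsum' : ∀ s : ℝ, ∑ i, (lam i + s * v i) = ∑ i, lam i := by
      intro s
      rw [Finset.sum_add_distrib, ← Finset.mul_sum, hsv, mul_zero, add_zero]
    have cone_pert : ∀ s : ℝ, |s| ≤ ε → InKostkaCone r (fun i => lam i + s * v i) mu := by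
      intro s hs
      have hsle : s ≤ ε := le_trans (le_abs_self s) hs
      have hsge : -ε ≤ s := neg_le.mp (le_trans (neg_le_abs s) hs)
      have hkR0 : (0:ℝ) ≤ (k:ℝ) := by positivity
      have hbkR : (0:ℝ) ≤ (b:ℝ) - k := by linarith
      have hP1 : 0 ≤ (s + ε) * (b:ℝ) := mul_nonneg (by linarith) (by linarith)
      have hP2 : 0 ≤ (s + ε) * ((b:ℝ) - k) := mul_nonneg (by linarith) hbkR
      have hP3 : 0 ≤ (ε - s) * (k:ℝ) := mul_nonneg (by linarith) hkR0
      have hP4 : 0 ≤ (ε - s) * ((b:ℝ) - k) := mul_nonneg (by linarith) hbkR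
      have hP5 : 0 ≤ ε * (k:ℝ) := mul_nonneg (le_of_lt hεpos) hkR0
      have hP6 : 0 ≤ ε * ((b:ℝ) - k) := mul_nonneg (le_of_lt hεpos) hbkR
      have h3k := h3 ⟨k, hkr⟩
      refine ⟨?_, h2, ?_, h4, ?_, ?_⟩
      · intro i j' hij
        show lam j' + s * v j' ≤ lam i + s * v i
        have hij' : (i:ℕ) ≤ (j':ℕ) := hij
        have hmono := h1 i j' hij
        rcases Nat.lt_or_ge (j':ℕ) k with hjk | hjk
        · rw [hvA i (by omega), hvA j' hjk]
          linarith
        · rcases Nat.lt_or_ge (j':ℕ) b with hjb' | hjb'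
          · rcases Nat.lt_or_ge (i:ℕ) k with hik | hik
            · rw [hvA i hik, hvB j' hjk hjb']
              have hmi : lam i = lam z := (hSmem i).mpr hik
              have hmj : lam j' ≤ lam ⟨k,hkr⟩ :=
                h1 ⟨k,hkr⟩ j' (by rw [Fin.le_def]; simpa using hjk)
              linarith
            · rw [hvB i hik (by omega), hvB j' hjk hjb']
              linarith
          · rw [hvC j' hjb']
            have hlj : lam j' = 0 := by
              by_contra h
              exact absurd ((hBmem j').mp h) (by omega)
            rcases Nat.lt_or_ge (i:ℕ) k with hik | hik
            · rw [hvA i hik, hlj]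
              have hmi : lam i = lam z := (hSmem i).mpr hik
              linarith
            · rcases Nat.lt_or_ge (i:ℕ) b with hib | hib
              · rw [hvB i hik hib, hlj]
                have := hε2 i hib
                linarith
              · rw [hvC i hib, hlj]
                have hli : lam i = 0 := by
                  by_contra h
                  exact absurd ((hBmem i).mp h) (by omega)
                rw [hli]
      · intro i
        show 0 ≤ lam i + s * v i
        rcases Nat.lt_or_ge (i:ℕ) k with hik | hik
        · rw [hvA i hik]
          have hmi : lam i = lam z := (hSmem i).mpr hik
          linarith
        · rcases Nat.lt_or_ge (i:ℕ) b with hib | hib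
          · rw [hvB i hik hib]
            have := hε2 i hib
            linarith
          · rw [hvC i hib]
            have := h3 i
            linarith
      · intro t ht1 ht2
        exact hdom s hs t ht1 ht2
      · show ∑ i, (lam i + s * v i) = ∑ i, mu i
        rw [hsum' s]
        exact h6
    have h0 := rigLam (fun i => ε * v i)
      (by show ∑ i, ε * v i = 0; rw [← Finset.mul_sum, hsv, mul_zero])
      (cone_pert ε (by rw [abs_of_pos hεpos]))
      (by
        have hneg := cone_pert (-ε) (by rw [abs_neg, abs_of_pos hεpos])
        have heq : (fun i => lam i - ε * v i) = (fun i => lam i + (-ε) * v i) :=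
          funext fun i => by ring
        rw [heq]
        exact hneg)
    have hz0 := congrFun h0 z
    simp only [Pi.zero_apply] at hz0
    rw [hvA z (by simp [hz]; omega)] at hz0
    have hpos' : (0:ℝ) < ε * ((b:ℝ) - (k:ℝ)) := by
      apply mul_pos hεpos
      have : (k:ℝ) < (b:ℝ) := by exact_mod_cast hkb
      linarith
    linarith
  -- assemble
  have hrR : (0:ℝ) < (r:ℝ) := by exact_mod_cast hr
  have hacard : (Finset.univ.filter fun i : Fin r => mu i ≠ 0).card = r := by
    have hamem : Finset.univ.filter (fun i : Fin r => mu i ≠ 0) = Finset.univ :=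
      Finset.filter_eq_self.mpr fun i _ => (hmupos i).ne'
    rw [hamem, Finset.card_univ, Fintype.card_fin]
  have hbcard : (Finset.univ.filter fun i : Fin r => lam i ≠ 0).card = b := by
    rw [← hB]
    exact hbdef.symm
  have hlamfin : ∀ i : Fin r, lam i = if (i:ℕ) < b then lam z else 0 := by
    intro i
    split_ifs with h
    · exact hlamconst i h
    · by_contra h'
      exact h ((hBmem i).mp h')
  have hslam : ∑ i, lam i = b * lam z := by
    rw [Finset.sum_congr rfl (fun i _ => hlamfin i), sum_if_lt_const b (lam z) hbr]
  have hsmu : ∑ i, mu i = r * mu z := by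
    rw [Finset.sum_congr rfl (fun i _ => hmuconst i), Finset.sum_const,
      Finset.card_univ, Fintype.card_fin, nsmul_eq_mul]
  have key : (b:ℝ) * lam z = (r:ℝ) * mu z := by
    rw [← hslam, ← hsmu]
    exact h6
  refine ⟨lam z / r, by positivity, ?_, ?_, ?_, ?_, ?_⟩
  · exact hbpos
  · rw [hacard]
    exact hbr
  · rw [hacard]
  · intro i
    rw [hacard, hlamfin i]
    split_ifs with h
    · field_simp
    · rfl
  · intro i
    rw [hacard, if_pos i.isLt, hmuconst i]
    field_simp
    linarith [key]
end

section
/- Let x = (x₁,...,x_t) be a sequence of nonzero integers with Σ_{i=1}^t x_i = 0 and all partial sums Σ_{i≤q} x_i ≥ 0 (a generalized Catalan sequence). If x consists of exactly two runs (a maximal block of positive entries followed by a maximal block of negative entries) and max_i x_i + max_i (−x_i) < t, then x is reducible: there is a nonempty proper subset of indices whose subsequence is generalized Catalan and whose complementary subsequence is also generalized Catalan. -/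
lemma keyB (u v : ℕ → ℕ) (m n b : ℕ) (hn : 0 < n)
    (hu1 : ∀ k, k < m → 1 ≤ u k) (hv1 : ∀ k, k < n → 1 ≤ v k)
    (hvb : ∀ k, k < n → v k ≤ b)
    (hS : ∑ k ∈ Finset.range m, u k = ∑ k ∈ Finset.range n, v k)
    (hmb : b < m) :
    ∃ i i' j j', i < i' ∧ i' ≤ m ∧ j ≤ j' ∧ j' ≤ n ∧
      (∑ k ∈ Finset.Ico i i', u k = ∑ k ∈ Finset.Ico j j', v k) ∧
      (0 < i ∨ i' < m) := by
  obtain ⟨p, hp⟩ : ∃ p : ℕ → ℕ, ∀ i, p i = ∑ k ∈ Finset.range i, u k := ⟨_, fun _ => rfl⟩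
  obtain ⟨q, hq⟩ : ∃ q : ℕ → ℕ, ∀ j, q j = ∑ k ∈ Finset.range j, v k := ⟨_, fun _ => rfl⟩
  have hb1 : 1 ≤ b := le_trans (hv1 0 hn) (hvb 0 hn)
  obtain ⟨J, hJdef⟩ : ∃ J : ℕ → ℕ, ∀ i, J i = Nat.findGreatest (fun j => q j ≤ p i) n :=
    ⟨_, fun _ => rfl⟩
  have hq0 : q 0 = 0 := by simp [hq]
  have hJle : ∀ i, J i ≤ n := fun i => (hJdef i) ▸ Nat.findGreatest_le n
  have hqJ : ∀ i, q (J i) ≤ p i := by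
    intro i
    rw [hJdef i]
    exact Nat.findGreatest_spec (P := fun j => q j ≤ p i) (Nat.zero_le n) (by omega)
  have hgt : ∀ i k, J i < k → k ≤ n → p i < q k := by
    intro i k hk hkn
    rw [hJdef i] at hk
    have := Nat.findGreatest_is_greatest (P := fun j => q j ≤ p i) hk hkn
    omega
  have hpmono : ∀ i i', i ≤ i' → p i ≤ p i' := by
    intro i i' h
    rw [hp, hp]
    exact Finset.sum_le_sum_of_subset (Finset.range_subset_range.2 h)
  have hJmono : ∀ i i', i ≤ i' → J i ≤ J i' := by
    intro i i' h
    by_contra hcon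
    push_neg at hcon
    have h1 := hgt i' (J i) hcon (hJle i)
    have h2 := hqJ i
    have h3 := hpmono i i' h
    omega
  have hqstep : ∀ j, j < n → q (j + 1) = q j + v j := by
    intro j hj
    rw [hq, hq, Finset.sum_range_succ]
  have hdlt : ∀ i, i ≤ m → p i - q (J i) < b := by
    intro i him
    by_cases h : J i < n
    · have h1 := hgt i (J i + 1) (Nat.lt_succ_self _) h
      have h2 := hqstep (J i) h
      have h3 := hvb (J i) h
      have h4 := hqJ i
      omega
    · have hJn : J i = n := le_antisymm (hJle i) (by omega)
      have h4 := hqJ i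
      have h5 : p i ≤ q n := by
        rw [hq n, ← hS, ← hp m]
        exact hpmono i m him
      rw [hJn] at h4 ⊢
      omega
  have hsump : ∀ i i', i ≤ i' → p i + ∑ k ∈ Finset.Ico i i', u k = p i' := by
    intro i i' h
    rw [hp, hp, Finset.range_eq_Ico, Finset.range_eq_Ico]
    exact Finset.sum_Ico_consecutive u (Nat.zero_le i) h
  have hsumq : ∀ j j', j ≤ j' → q j + ∑ k ∈ Finset.Ico j j', v k = q j' := by
    intro j j' h
    rw [hq, hq, Finset.range_eq_Ico, Finset.range_eq_Ico]
    exact Finset.sum_Ico_consecutive v (Nat.zero_le j) h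
  by_cases hz : ∃ i, 0 < i ∧ i < m ∧ p i = q (J i)
  · obtain ⟨i, hi0, him, hieq⟩ := hz
    refine ⟨0, i, 0, J i, hi0, le_of_lt him, Nat.zero_le _, hJle i, ?_, Or.inr him⟩
    have h1 := hsump 0 i (Nat.zero_le i)
    have h2 := hsumq 0 (J i) (Nat.zero_le _)
    have h3 : p 0 = 0 := by simp [hp]
    omega
  · push_neg at hz
    have hmap : ∀ i ∈ Finset.Ico 1 m, (p i - q (J i)) ∈ Finset.Ico 1 b := by
      intro i hi
      simp only [Finset.mem_Ico] at hi ⊢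
      have h1 := hdlt i (le_of_lt hi.2)
      have h2 := hz i hi.1 hi.2
      have h3 := hqJ i
      omega
    have hcard : (Finset.Ico 1 b).card < (Finset.Ico 1 m).card := by
      simp only [Nat.card_Ico]
      omega
    obtain ⟨i, hi, i', hi', hne, heq⟩ :=
      Finset.exists_ne_map_eq_of_card_lt_of_maps_to hcard hmap
    simp only [Finset.mem_Ico] at hi hi'
    have key : ∀ a a', a < a' → a' < m → p a - q (J a) = p a' - q (J a') →
        ∃ i i' j j', i < i' ∧ i' ≤ m ∧ j ≤ j' ∧ j' ≤ n ∧
          (∑ k ∈ Finset.Ico i i', u k = ∑ k ∈ Finset.Ico j j', v k) ∧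
          (0 < i ∨ i' < m) := by
      intro a a' hlt ham hd
      refine ⟨a, a', J a, J a', hlt, le_of_lt ham, hJmono a a' (le_of_lt hlt),
        hJle a', ?_, Or.inr ham⟩
      have h1 := hsump a a' (le_of_lt hlt)
      have h2 := hsumq (J a) (J a') (hJmono a a' (le_of_lt hlt))
      have h3 := hqJ a
      have h4 := hqJ a'
      omega
    rcases Nat.lt_or_ge i i' with hlt | hge
    · exact key i i' hlt hi'.2 heq
    · exact key i' i (lt_of_le_of_ne hge (Ne.symm hne)) hi.2 heq.symm

lemma prefA (t m : ℕ) (x : ℕ → ℤ) (hpos : ∀ i, i < m → 0 < x i)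
    (hneg : ∀ i, m ≤ i → i < t → x i < 0) (I : Finset ℕ) (hI : I ⊆ Finset.range t)
    (h0 : ∑ i ∈ I, x i = 0) : ∀ q, 0 ≤ ∑ i ∈ I.filter (· < q), x i := by
  intro q
  by_cases hq : q ≤ m
  · apply Finset.sum_nonneg
    intro i hi
    simp only [Finset.mem_filter] at hi
    exact le_of_lt (hpos i (lt_of_lt_of_le hi.2 hq))
  · have hsplit := Finset.sum_filter_add_sum_filter_not I (· < q) x
    have hnonpos : ∑ i ∈ I.filter (fun i => ¬ i < q), x i ≤ 0 := by
      apply Finset.sum_nonpos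
      intro i hi
      simp only [Finset.mem_filter] at hi
      have hit : i < t := Finset.mem_range.1 (hI hi.1)
      exact le_of_lt (hneg i (by omega) hit)
    rw [h0] at hsplit
    linarith

lemma assemble (t m n : ℕ) (x : ℕ → ℤ) (u v : ℕ → ℕ)
    (htn : t = m + n) (hm0 : 0 < m) (hn0 : 0 < n)
    (hpos : ∀ i, i < m → 0 < x i) (hneg : ∀ i, m ≤ i → i < t → x i < 0)
    (hsum : ∑ i ∈ Finset.range t, x i = 0)
    (hu : ∀ k, k < m → (u k : ℤ) = x k) (hv : ∀ k, k < n → (v k : ℤ) = -x (m + k))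
    (i i' j j' : ℕ) (hi' : i' ≤ m) (hij : i ≤ i') (hjle : j ≤ j') (hj' : j' ≤ n)
    (hEq : ∑ k ∈ Finset.Ico i i', u k = ∑ k ∈ Finset.Ico j j', v k)
    (hne : i < i' ∨ j < j')
    (hprop : 0 < i ∨ i' < m ∨ 0 < j ∨ j' < n) :
    ∃ I ⊆ Finset.range t, I.Nonempty ∧ I ≠ Finset.range t ∧
      (∑ i ∈ I, x i = 0) ∧
      (∀ q, 0 ≤ ∑ i ∈ I.filter (· < q), x i) ∧
      (∑ i ∈ Finset.range t \ I, x i = 0) ∧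
      (∀ q, 0 ≤ ∑ i ∈ (Finset.range t \ I).filter (· < q), x i) := by
  refine ⟨Finset.Ico i i' ∪ Finset.Ico (m + j) (m + j'), ?_, ?_, ?_, ?_, ?_, ?_, ?_⟩
  case _ =>
    apply Finset.union_subset <;> intro z hz <;>
      simp only [Finset.mem_Ico] at hz <;> exact Finset.mem_range.2 (by omega)
  case _ =>
    rcases hne with h | h
    · exact ⟨i, Finset.mem_union_left _ (Finset.mem_Ico.2 ⟨le_refl i, h⟩)⟩
    · exact ⟨m + j, Finset.mem_union_right _ (Finset.mem_Ico.2 ⟨le_refl _, by omega⟩)⟩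
  case _ =>
    have : ∃ e, e ∈ Finset.range t ∧
        e ∉ Finset.Ico i i' ∪ Finset.Ico (m + j) (m + j') := by
      rcases hprop with h | h | h | h
      · exact ⟨0, Finset.mem_range.2 (by omega), by
          simp only [Finset.mem_union, Finset.mem_Ico]; omega⟩
      · exact ⟨i', Finset.mem_range.2 (by omega), by
          simp only [Finset.mem_union, Finset.mem_Ico]; omega⟩
      · exact ⟨m, Finset.mem_range.2 (by omega), by
          simp only [Finset.mem_union, Finset.mem_Ico]; omega⟩
      · exact ⟨m + j', Finset.mem_range.2 (by omega), by
          simp only [Finset.mem_union, Finset.mem_Ico]; omega⟩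
    obtain ⟨e, her, hni⟩ := this
    intro hEqI
    exact hni (hEqI.symm ▸ her)
  all_goals {
    have hdisj : Disjoint (Finset.Ico i i') (Finset.Ico (m + j) (m + j')) := by
      rw [Finset.disjoint_left]
      intro z hz hz'
      simp only [Finset.mem_Ico] at hz hz'
      omega
    have hIsub : Finset.Ico i i' ∪ Finset.Ico (m + j) (m + j') ⊆ Finset.range t := by
      apply Finset.union_subset <;> intro z hz <;>
        simp only [Finset.mem_Ico] at hz <;> exact Finset.mem_range.2 (by omega)
    have h1 : ∑ k ∈ Finset.Ico i i', x k = ((∑ k ∈ Finset.Ico i i', u k : ℕ) : ℤ) := by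
      rw [Nat.cast_sum]
      apply Finset.sum_congr rfl
      intro k hk
      simp only [Finset.mem_Ico] at hk
      exact (hu k (by omega)).symm
    have h2 : ∑ k ∈ Finset.Ico (m + j) (m + j'), x k
        = -((∑ k ∈ Finset.Ico j j', v k : ℕ) : ℤ) := by
      rw [Finset.sum_Ico_eq_sum_range, Finset.sum_Ico_eq_sum_range]
      have hd : m + j' - (m + j) = j' - j := by omega
      rw [hd, Nat.cast_sum, ← Finset.sum_neg_distrib]
      apply Finset.sum_congr rfl
      intro k hk
      simp only [Finset.mem_range] at hk
      have : (v (j + k) : ℤ) = -x (m + (j + k)) := hv (j + k) (by omega)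
      have harr : m + j + k = m + (j + k) := by omega
      rw [harr]
      omega
    have hIzero : ∑ k ∈ Finset.Ico i i' ∪ Finset.Ico (m + j) (m + j'), x k = 0 := by
      rw [Finset.sum_union hdisj, h1, h2, hEq]
      ring
    have hCzero : ∑ k ∈ Finset.range t \ (Finset.Ico i i' ∪ Finset.Ico (m + j) (m + j')),
        x k = 0 := by
      rw [Finset.sum_sdiff_eq_sub hIsub, hsum, hIzero]
      ring
    first
    | exact hIzero
    | exact prefA t m x hpos hneg _ hIsub hIzero
    | exact hCzero
    | exact prefA t m x hpos hneg _ (Finset.sdiff_subset) hCzero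
  }

/-- a generalized Catalan sequence `x 0, ..., x (t-1)` (nonzero integers,
total sum zero, nonnegative prefix sums) consisting of exactly two runs — positives on
`[0, m)` followed by negatives on `[m, t)` — with cost (max of the first run plus max of
the absolute values in the second run) less than its width `t` is reducible: there is a
nonempty proper subset `I` of the indices such that both the subsequence indexed by `I`
and the complementary subsequence are generalized Catalan. -/
theorem stmt11 (t m : ℕ) (x : ℕ → ℤ)
    (hm0 : 0 < m) (hmt : m < t)
    (hpos : ∀ i, i < m → 0 < x i) (hneg : ∀ i, m ≤ i → i < t → x i < 0)
    (hsum : ∑ i ∈ Finset.range t, x i = 0)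
    (hpref : ∀ q, q ≤ t → 0 ≤ ∑ i ∈ Finset.range q, x i)
    (hcost : ((Finset.range m).sup fun i => (x i).toNat) +
        ((Finset.Ico m t).sup fun i => (-x i).toNat) < t) :
    ∃ I ⊆ Finset.range t, I.Nonempty ∧ I ≠ Finset.range t ∧
      (∑ i ∈ I, x i = 0) ∧
      (∀ q, 0 ≤ ∑ i ∈ I.filter (· < q), x i) ∧
      (∑ i ∈ Finset.range t \ I, x i = 0) ∧
      (∀ q, 0 ≤ ∑ i ∈ (Finset.range t \ I).filter (· < q), x i) := by
  obtain ⟨n, htn⟩ : ∃ n, t = m + n := ⟨t - m, by omega⟩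
  have hn0 : 0 < n := by omega
  obtain ⟨u, hudef⟩ : ∃ u : ℕ → ℕ, ∀ k, u k = (x k).toNat := ⟨_, fun _ => rfl⟩
  obtain ⟨v, hvdef⟩ : ∃ v : ℕ → ℕ, ∀ k, v k = (-x (m + k)).toNat := ⟨_, fun _ => rfl⟩
  have hu : ∀ k, k < m → (u k : ℤ) = x k := by
    intro k hk
    rw [hudef k]
    exact Int.toNat_of_nonneg (le_of_lt (hpos k hk))
  have hv : ∀ k, k < n → (v k : ℤ) = -x (m + k) := by
    intro k hk
    rw [hvdef k]
    exact Int.toNat_of_nonneg (by linarith [hneg (m + k) (by omega) (by omega)])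
  have hu1 : ∀ k, k < m → 1 ≤ u k := by
    intro k hk
    have h1 := hu k hk
    have h2 := hpos k hk
    omega
  have hv1 : ∀ k, k < n → 1 ≤ v k := by
    intro k hk
    have h1 := hv k hk
    have h2 := hneg (m + k) (by omega) (by omega)
    omega
  have huA : ∀ k, k < m → u k ≤ (Finset.range m).sup fun i => (x i).toNat := by
    intro k hk
    rw [hudef k]
    exact Finset.le_sup (f := fun i => (x i).toNat) (Finset.mem_range.2 hk)
  have hvB : ∀ k, k < n → v k ≤ (Finset.Ico m t).sup fun i => (-x i).toNat := by
    intro k hk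
    rw [hvdef k]
    exact Finset.le_sup (f := fun i => (-x i).toNat)
      (Finset.mem_Ico.2 ⟨Nat.le_add_right m k, by omega⟩)
  have hSeq : ∑ k ∈ Finset.range m, u k = ∑ k ∈ Finset.range n, v k := by
    have h1 : ((∑ k ∈ Finset.range m, u k : ℕ) : ℤ) = ∑ k ∈ Finset.range m, x k := by
      rw [Nat.cast_sum]
      exact Finset.sum_congr rfl fun k hk => hu k (Finset.mem_range.1 hk)
    have h2 : ((∑ k ∈ Finset.range n, v k : ℕ) : ℤ) = -∑ k ∈ Finset.Ico m t, x k := by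
      rw [Nat.cast_sum, Finset.sum_Ico_eq_sum_range, ← Finset.sum_neg_distrib]
      have hd : t - m = n := by omega
      rw [hd]
      exact Finset.sum_congr rfl fun k hk => hv k (Finset.mem_range.1 hk)
    have h3 : ∑ k ∈ Finset.range m, x k + ∑ k ∈ Finset.Ico m t, x k = 0 := by
      rw [Finset.range_eq_Ico, Finset.sum_Ico_consecutive x (Nat.zero_le m) (le_of_lt hmt),
        ← Finset.range_eq_Ico]
      exact hsum
    omega
  have hcase : ((Finset.Ico m t).sup fun i => (-x i).toNat) < m ∨
      ((Finset.range m).sup fun i => (x i).toNat) < n := by omega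
  rcases hcase with hc | hc
  · obtain ⟨i, i', j, j', h1, h2, h3, h4, h5, h6⟩ :=
      keyB u v m n _ hn0 hu1 hv1 hvB hSeq hc
    refine assemble t m n x u v htn hm0 hn0 hpos hneg hsum hu hv i i' j j'
      h2 (le_of_lt h1) h3 h4 h5 (Or.inl h1) ?_
    rcases h6 with h | h
    · exact Or.inl h
    · exact Or.inr (Or.inl h)
  · obtain ⟨j, j', i, i', h1, h2, h3, h4, h5, h6⟩ :=
      keyB v u n m _ hm0 hv1 hu1 huA hSeq.symm hc
    refine assemble t m n x u v htn hm0 hn0 hpos hneg hsum hu hv i i' j j'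
      h4 h3 (le_of_lt h1) h2 h5.symm (Or.inr h1) ?_
    rcases h6 with h | h
    · exact Or.inr (Or.inr (Or.inl h))
    · exact Or.inr (Or.inr (Or.inr h))
end

section
/- With λ̄ and μ̄ as in the Subset Sum reduction (λ̄ has columns of lengths A+1, a₁,...,a_d; μ̄ has columns of lengths A+1+(A−b) and b, where A = Σ a_i, a₁ ≥ ... ≥ a_d > 0, 0 < b ≤ A), the pair (λ̄, μ̄) decomposes nontrivially in the Kostka semigroup (i.e., (λ̄,μ̄) = (λ•,μ•)+(λ°,μ°) with both summands nonzero pairs of partitions satisfying dominance and equal size) if and only if there exists a subset S ⊆ {1,...,d} with Σ_{i∈S} a_i = b. -/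
/-- `(lam, mu)` is an element of the Kostka semigroup of rank `r`: both are partitions with
at most `r` parts (antitone, vanishing from index `r`), of equal size, with `lam`
dominating `mu`. -/
def KostkaElt (r : ℕ) (lam mu : ℕ → ℕ) : Prop :=
  Antitone lam ∧ Antitone mu ∧ (∀ i, r ≤ i → lam i = 0) ∧ (∀ i, r ≤ i → mu i = 0) ∧
  (∑ i ∈ Finset.range r, lam i = ∑ i ∈ Finset.range r, mu i) ∧
  (∀ t, t ≤ r → ∑ i ∈ Finset.range t, mu i ≤ ∑ i ∈ Finset.range t, lam i)

/-- `(lam, mu)` admits a nontrivial decomposition in the Kostka semigroup of rank `r`. -/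
def KostkaReducible (r : ℕ) (lam mu : ℕ → ℕ) : Prop :=
  ∃ l1 m1 l2 m2 : ℕ → ℕ, KostkaElt r l1 m1 ∧ KostkaElt r l2 m2 ∧
    (∀ i, lam i = l1 i + l2 i) ∧ (∀ i, mu i = m1 i + m2 i) ∧
    (∃ i, l1 i ≠ 0 ∨ m1 i ≠ 0) ∧ (∃ i, l2 i ≠ 0 ∨ m2 i ≠ 0)

private lemma sum_ind (c t : ℕ) :
    ∑ i ∈ Finset.range t, (if i < c then (1:ℕ) else 0) = min t c := by
  induction t with
  | zero => simp
  | succ n ih => rw [Finset.sum_range_succ, ih]; split_ifs <;> omega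

private lemma sum_cardfilter (a : ℕ → ℕ) (T : Finset ℕ) (t : ℕ) :
    ∑ i ∈ Finset.range t, ((T.filter fun j => i < a j).card) = ∑ j ∈ T, min t (a j) := by
  simp only [Finset.card_filter]
  rw [Finset.sum_comm]
  exact Finset.sum_congr rfl fun j _ => sum_ind (a j) t

private lemma anti_ind (c : ℕ) : Antitone (fun i => if i < c then (1:ℕ) else 0) := by
  intro i j hij
  dsimp only
  split_ifs <;> omega

private lemma anti_card (a : ℕ → ℕ) (T : Finset ℕ) :
    Antitone (fun i => (T.filter fun j => i < a j).card) := by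
  intro i j hij
  dsimp only
  apply Finset.card_le_card
  intro x hx
  simp only [Finset.mem_filter] at hx ⊢
  exact ⟨hx.1, lt_of_le_of_lt hij hx.2⟩

private lemma abel_sum (f : ℕ → ℕ) (hf : Antitone f) (N : ℕ) :
    ∑ ℓ ∈ Finset.range N, (ℓ + 1) * (f ℓ - f (ℓ + 1)) + N * f N
      = ∑ ℓ ∈ Finset.range N, f ℓ := by
  induction N with
  | zero => simp
  | succ n ih =>
    rw [Finset.sum_range_succ, Finset.sum_range_succ (f := f)]
    have h1 : f (n + 1) ≤ f n := hf (by omega)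
    have h2 : (n + 1) * (f n - f (n + 1)) + (n + 1) * f (n + 1) = (n + 1) * f n := by
      rw [← Nat.mul_add]; congr 1; omega
    have h3 : (n + 1) * f n = n * f n + f n := by ring
    have h4 : (n + 1) * f (n + 1) = n * f (n + 1) + f (n + 1) := by ring
    omega

/-- The key extraction: if `lamb` splits as a sum of two antitone functions and the first
has total size `b ≤ A`, then some subset of the `a i` sums to `b`. -/
private lemma extract (d A b : ℕ) (a : ℕ → ℕ)
    (hA : A = ∑ i ∈ Finset.range d, a i) (hbA : b ≤ A)
    (l1 l2 : ℕ → ℕ) (h1a : Antitone l1) (h2a : Antitone l2)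
    (hl : ∀ i, (if i < A + 1 then 1 else 0) + ((Finset.range d).filter fun j => i < a j).card
            = l1 i + l2 i)
    (hsum : ∑ i ∈ Finset.range (2 * A + 1), l1 i = b) :
    ∃ S ⊆ Finset.range d, ∑ i ∈ S, a i = b := by
  -- l1 A = 0
  have hl1A : l1 A = 0 := by
    by_contra h
    have h1 : ∀ i ∈ Finset.range (A + 1), 1 ≤ l1 i := by
      intro i hi
      simp only [Finset.mem_range] at hi
      have := h1a (show i ≤ A by omega)
      omega
    have h2 : A + 1 ≤ ∑ i ∈ Finset.range (A + 1), l1 i := by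
      calc A + 1 = ∑ _i ∈ Finset.range (A + 1), 1 := by simp
        _ ≤ _ := Finset.sum_le_sum h1
    have h3 : ∑ i ∈ Finset.range (A + 1), l1 i ≤ ∑ i ∈ Finset.range (2 * A + 1), l1 i :=
      Finset.sum_le_sum_of_subset (Finset.range_subset_range.mpr (by omega))
    omega
  have hl1z : ∀ i, A ≤ i → l1 i = 0 := fun i hi => by
    have := h1a hi
    omega
  have hsum' : ∑ i ∈ Finset.range A, l1 i = b := by
    rw [← hsum]
    apply Finset.sum_subset (Finset.range_subset_range.mpr (by omega))
    intro x _ hx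
    simp only [Finset.mem_range] at hx
    exact hl1z x (by omega)
  -- per-column bound
  have hcnt : ∀ ℓ < A, l1 ℓ ≤ l1 (ℓ + 1) + ((Finset.range d).filter fun j => a j = ℓ + 1).card := by
    intro ℓ hℓ
    have e1 := hl ℓ
    have e2 := hl (ℓ + 1)
    rw [if_pos (by omega)] at e1
    rw [if_pos (by omega)] at e2
    have hsplit : ((Finset.range d).filter fun j => ℓ < a j).card
        = ((Finset.range d).filter fun j => ℓ + 1 < a j).card
          + ((Finset.range d).filter fun j => a j = ℓ + 1).card := by
      simp only [Finset.card_filter]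
      rw [← Finset.sum_add_distrib]
      exact Finset.sum_congr rfl fun j _ => by split_ifs <;> omega
    have h22 : l2 (ℓ + 1) ≤ l2 ℓ := h2a (by omega)
    omega
  -- choose subsets of columns
  have hex : ∀ ℓ, ∃ T : Finset ℕ, ℓ < A →
      T ⊆ (Finset.range d).filter (fun j => a j = ℓ + 1) ∧ T.card = l1 ℓ - l1 (ℓ + 1) := by
    intro ℓ
    by_cases hℓ : ℓ < A
    · obtain ⟨T, hT1, hT2⟩ := Finset.exists_subset_card_eq
        (s := (Finset.range d).filter (fun j => a j = ℓ + 1)) (n := l1 ℓ - l1 (ℓ + 1))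
        (by have := hcnt ℓ hℓ; omega)
      exact ⟨T, fun _ => ⟨hT1, hT2⟩⟩
    · exact ⟨∅, fun h => absurd h hℓ⟩
  choose T hT using hex
  have haT : ∀ ℓ, ℓ < A → ∀ j ∈ T ℓ, j ∈ Finset.range d ∧ a j = ℓ + 1 := by
    intro ℓ hℓ j hj
    have := (hT ℓ hℓ).1 hj
    simpa using Finset.mem_filter.mp this
  refine ⟨(Finset.range A).biUnion T, ?_, ?_⟩
  · intro x hx
    obtain ⟨ℓ, hℓ, hxT⟩ := Finset.mem_biUnion.mp hx
    simp only [Finset.mem_range] at hℓ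
    exact (haT ℓ hℓ x hxT).1
  · have hdisj : (↑(Finset.range A) : Set ℕ).PairwiseDisjoint T := by
      intro ℓ hℓ ℓ' hℓ' hne
      simp only [Finset.coe_range, Set.mem_Iio] at hℓ hℓ'
      rw [Function.onFun, Finset.disjoint_left]
      intro x hx hx'
      have := (haT ℓ hℓ x hx).2
      have := (haT ℓ' hℓ' x hx').2
      omega
    rw [Finset.sum_biUnion hdisj]
    have : ∀ ℓ ∈ Finset.range A, ∑ i ∈ T ℓ, a i = (ℓ + 1) * (l1 ℓ - l1 (ℓ + 1)) := by
      intro ℓ hℓ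
      simp only [Finset.mem_range] at hℓ
      rw [Finset.sum_congr rfl (fun j hj => (haT ℓ hℓ j hj).2), Finset.sum_const,
        (hT ℓ hℓ).2, smul_eq_mul, mul_comm]
    rw [Finset.sum_congr rfl this]
    have hab := abel_sum l1 h1a A
    rw [hl1A, Nat.mul_zero, Nat.add_zero] at hab
    rw [hab, hsum']

/-- with `lamb`, `mub` as in the Subset Sum reduction (columns
`A + 1, a 0, ..., a (d-1)` and `A + 1 + (A - b), b` respectively), the pair `(lamb, mub)`
admits a nontrivial decomposition in the Kostka semigroup (of rank `2A + 1`, which bounds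
the number of parts) iff some subset of the `a i` sums to `b`. -/
theorem stmt14 (d A b : ℕ) (a : ℕ → ℕ)
    (hsort : ∀ i j, i ≤ j → j < d → a j ≤ a i) (hpos : ∀ i, i < d → 0 < a i)
    (hA : A = ∑ i ∈ Finset.range d, a i) (hb0 : 0 < b) (hbA : b ≤ A)
    (lamb mub : ℕ → ℕ)
    (hlamb : ∀ i, lamb i =
      (if i < A + 1 then 1 else 0) + ((Finset.range d).filter fun j => i < a j).card)
    (hmub : ∀ i, mub i =
      (if i < A + 1 + (A - b) then 1 else 0) + (if i < b then 1 else 0)) :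
    KostkaReducible (2 * A + 1) lamb mub ↔
      ∃ S ⊆ Finset.range d, ∑ i ∈ S, a i = b := by
  have haA : ∀ j ∈ Finset.range d, a j ≤ A :=
    fun j hj => hA ▸ Finset.single_le_sum (fun _ _ => Nat.zero_le _) hj
  constructor
  · rintro ⟨l1, m1, l2, m2, ⟨h1al, h1am, h1zl, h1zm, h1s, _⟩,
      ⟨h2al, h2am, h2zl, h2zm, h2s, _⟩, hl, hm, hnt1, hnt2⟩
    -- values of mub
    have e0 : m1 0 + m2 0 = 2 := by
      have := (hm 0).symm.trans (hmub 0)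
      rw [if_pos (by omega), if_pos (by omega)] at this
      omega
    -- neither mu-part is zero
    have hzero : ∀ l m : ℕ → ℕ, Antitone l → Antitone m →
        (∀ i, 2 * A + 1 ≤ i → l i = 0) →
        (∑ i ∈ Finset.range (2 * A + 1), l i = ∑ i ∈ Finset.range (2 * A + 1), m i) →
        m 0 = 0 → ∀ i, l i = 0 ∧ m i = 0 := by
      intro l m hla hma hlz hs hm0 i
      have hmall : ∀ j, m j = 0 := fun j => by have := hma (Nat.zero_le j); omega
      have hms : ∑ i ∈ Finset.range (2 * A + 1), m i = 0 :=
        Finset.sum_eq_zero fun j _ => hmall j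
      rw [hms] at hs
      refine ⟨?_, hmall i⟩
      by_cases hi : i < 2 * A + 1
      · exact (Finset.sum_eq_zero_iff.mp hs) i (Finset.mem_range.mpr hi)
      · exact hlz i (by omega)
    have hm10 : m1 0 ≠ 0 := by
      intro h
      obtain ⟨i, hi⟩ := hnt1
      rcases hi with hi | hi
      · exact hi (hzero l1 m1 h1al h1am h1zl h1s h i).1
      · exact hi (hzero l1 m1 h1al h1am h1zl h1s h i).2
    have hm20 : m2 0 ≠ 0 := by
      intro h
      obtain ⟨i, hi⟩ := hnt2
      rcases hi with hi | hi
      · exact hi (hzero l2 m2 h2al h2am h2zl h2s h i).1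
      · exact hi (hzero l2 m2 h2al h2am h2zl h2s h i).2
    have hm11 : m1 0 = 1 := by omega
    have hm21 : m2 0 = 1 := by omega
    have hm1le : ∀ i, m1 i ≤ 1 := fun i => by have := h1am (Nat.zero_le i); omega
    have hm2le : ∀ i, m2 i ≤ 1 := fun i => by have := h2am (Nat.zero_le i); omega
    have eb : m1 b + m2 b = 1 := by
      have := (hm b).symm.trans (hmub b)
      rw [if_pos (by omega), if_neg (by omega)] at this
      omega
    have hlow : ∀ i < b, m1 i + m2 i = 2 := by
      intro i hi
      have := (hm i).symm.trans (hmub i)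
      rw [if_pos (by omega), if_pos (by omega)] at this
      omega
    -- a 0/1-valued antitone column vanishing at b (and full below b) has sum b
    have hcol : ∀ m : ℕ → ℕ, Antitone m → (∀ i, m i ≤ 1) → m b = 0 → (∀ i < b, 1 ≤ m i) →
        ∑ i ∈ Finset.range (2 * A + 1), m i = b := by
      intro m hma hle hmb hfull
      have : ∀ i ∈ Finset.range (2 * A + 1), m i = if i < b then 1 else 0 := by
        intro i _
        by_cases hi : i < b
        · rw [if_pos hi]; have := hfull i hi; have := hle i; omega
        · rw [if_neg hi]; have := hma (show b ≤ i by omega); omega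
      rw [Finset.sum_congr rfl this, sum_ind]
      omega
    rcases (show m1 b = 0 ∨ m2 b = 0 by omega) with hb1 | hb2
    · have hs1 : ∑ i ∈ Finset.range (2 * A + 1), m1 i = b :=
        hcol m1 h1am hm1le hb1 (fun i hi => by have := hlow i hi; have := hm2le i; omega)
      exact extract d A b a hA hbA l1 l2 h1al h2al
        (fun i => by rw [← hlamb i]; exact hl i) (h1s.trans hs1)
    · have hs2 : ∑ i ∈ Finset.range (2 * A + 1), m2 i = b :=
        hcol m2 h2am hm2le hb2 (fun i hi => by have := hlow i hi; have := hm1le i; omega)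
      exact extract d A b a hA hbA l2 l1 h2al h1al
        (fun i => by rw [← hlamb i, hl i]; exact Nat.add_comm _ _) (h2s.trans hs2)
  · rintro ⟨S, hS, hSb⟩
    have haS : ∀ j ∈ S, a j ≤ A := fun j hj => haA j (hS hj)
    have hdiffsum : ∑ j ∈ Finset.range d \ S, a j + b = A := by
      rw [← hSb, Finset.sum_sdiff hS, hA]
    have hdiff' : (Finset.range d \ S).sum a + b = A := hdiffsum
    have hSb' : S.sum a = b := hSb
    refine ⟨(fun i => (S.filter fun j => i < a j).card),
      (fun i => if i < b then 1 else 0),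
      (fun i => (if i < A + 1 then 1 else 0)
        + ((Finset.range d \ S).filter fun j => i < a j).card),
      (fun i => if i < A + 1 + (A - b) then 1 else 0),
      ⟨anti_card a S, anti_ind b, ?_, ?_, ?_, ?_⟩,
      ⟨(anti_ind (A + 1)).add (anti_card a (Finset.range d \ S)), anti_ind (A + 1 + (A - b)),
        ?_, ?_, ?_, ?_⟩, ?_, ?_, ?_, ?_⟩
    · -- l1 vanishes from rank
      intro i hi
      dsimp only
      rw [Finset.card_eq_zero, Finset.filter_eq_empty_iff]
      intro j hj
      have := haS j hj
      omega
    · -- m1 vanishes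
      intro i hi
      dsimp only
      rw [if_neg (by omega)]
    · -- sizes equal for pair 1
      rw [sum_cardfilter, sum_ind, min_eq_right (by omega)]
      rw [Finset.sum_congr rfl (fun j hj => min_eq_right (by have := haS j hj; omega)), hSb]
    · -- dominance for pair 1
      intro t ht
      rw [sum_cardfilter, sum_ind]
      by_cases hc : ∃ j ∈ S, t ≤ a j
      · obtain ⟨j, hjS, hj⟩ := hc
        calc min t b ≤ t := min_le_left _ _
          _ = min t (a j) := (min_eq_left hj).symm
          _ ≤ ∑ j ∈ S, min t (a j) :=
            Finset.single_le_sum (f := fun j => min t (a j)) (fun _ _ => Nat.zero_le _) hjS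
      · push_neg at hc
        rw [Finset.sum_congr rfl (fun j hj => min_eq_right (le_of_lt (hc j hj))), hSb]
        exact min_le_right _ _
    · -- l2 vanishes from rank
      intro i hi
      dsimp only
      have hc : ((Finset.range d \ S).filter fun j => i < a j) = ∅ := by
        rw [Finset.filter_eq_empty_iff]
        intro j hj
        have := haA j (Finset.mem_sdiff.mp hj).1
        omega
      rw [if_neg (by omega), hc, Finset.card_empty]
    · -- m2 vanishes
      intro i hi
      dsimp only
      rw [if_neg (by omega)]
    · -- sizes equal for pair 2
      rw [Finset.sum_add_distrib, sum_ind, sum_ind, sum_cardfilter,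
        min_eq_right (by omega), min_eq_right (by omega)]
      rw [Finset.sum_congr rfl (fun j hj =>
        min_eq_right (by have := haA j (Finset.mem_sdiff.mp hj).1; omega))]
      omega
    · -- dominance for pair 2
      intro t ht
      rw [Finset.sum_add_distrib, sum_ind, sum_ind, sum_cardfilter]
      by_cases htA : t ≤ A + 1
      · calc min t (A + 1 + (A - b)) ≤ t := min_le_left _ _
          _ = min t (A + 1) := (min_eq_left htA).symm
          _ ≤ _ := Nat.le_add_right _ _
      · rw [Finset.sum_congr rfl (fun j hj =>
          min_eq_right (by have := haA j (Finset.mem_sdiff.mp hj).1; omega)),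
          (min_eq_right (show A + 1 ≤ t by omega) : min t (A + 1) = A + 1)]
        have h1 : min t (A + 1 + (A - b)) ≤ A + 1 + (A - b) := min_le_right _ _
        omega
    · -- lamb splits
      intro i
      dsimp only
      rw [hlamb i]
      have hsplit : ((Finset.range d \ S).filter fun j => i < a j).card
          + (S.filter fun j => i < a j).card
          = ((Finset.range d).filter fun j => i < a j).card := by
        simp only [Finset.card_filter]
        exact Finset.sum_sdiff hS
      omega
    · -- mub splits
      intro i
      dsimp only
      rw [hmub i]
      exact Nat.add_comm _ _
    · exact ⟨0, Or.inr (by simp only; rw [if_pos (by omega)]; omega)⟩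
    · exact ⟨0, Or.inr (by simp only; rw [if_pos (by omega)]; omega)⟩
end

section
/- The pair (λ, μ) with λ the rectangle with r−1 rows of length r and μ the rectangle with r rows of length r−1 is an irreducible element of the Kostka semigroup of rank r: any decomposition (λ,μ) = (λ¹,μ¹)+(λ²,μ²) into elements of the semigroup has one summand equal to zero. -/

lemma const_of_antitone_sum (f g : ℕ → ℕ) (hf : Antitone f) (hg : Antitone g) (c n : ℕ)
    (h : ∀ i, i < n → f i + g i = c) : ∀ i, i < n → f i = f 0 := by
  intro i hi
  have h0 := h 0 (lt_of_le_of_lt (Nat.zero_le i) hi)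
  have hi' := h i hi
  have hf' := hf (Nat.zero_le i)
  have hg' := hg (Nat.zero_le i)
  omega

/-- the pair consisting of the rectangle with `r - 1` rows of length `r`
and the rectangle with `r` rows of length `r - 1` is irreducible in the Kostka semigroup
of rank `r`: in any decomposition into two semigroup elements, one summand is zero. -/
theorem stmt17 (r : ℕ) (hr : 2 ≤ r) :
    ∀ l1 m1 l2 m2 : ℕ → ℕ, KostkaElt r l1 m1 → KostkaElt r l2 m2 →
      (∀ i, (if i < r - 1 then r else 0) = l1 i + l2 i) →
      (∀ i, (if i < r then r - 1 else 0) = m1 i + m2 i) →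
      ((∀ i, l1 i = 0 ∧ m1 i = 0) ∨ (∀ i, l2 i = 0 ∧ m2 i = 0)) := by
  intro l1 m1 l2 m2 h1 h2 hadd hmadd
  obtain ⟨hl1a, hm1a, hl1z, hm1z, hs1, hd1⟩ := h1
  obtain ⟨hl2a, hm2a, hl2z, hm2z, hs2, hd2⟩ := h2
  have hladd : ∀ i, i < r - 1 → l1 i + l2 i = r := by
    intro i hi; have := hadd i; rw [if_pos hi] at this; omega
  have hmadd' : ∀ i, i < r → m1 i + m2 i = r - 1 := by
    intro i hi; have := hmadd i; rw [if_pos hi] at this; omega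
  have hlconst := const_of_antitone_sum l1 l2 hl1a hl2a r (r-1) hladd
  have hmconst := const_of_antitone_sum m1 m2 hm1a hm2a (r-1) r hmadd'
  have hlzero : ∀ i, r - 1 ≤ i → l1 i = 0 ∧ l2 i = 0 := by
    intro i hi; have := hadd i; rw [if_neg (by omega)] at this; omega
  have hmzero : ∀ i, r ≤ i → m1 i = 0 ∧ m2 i = 0 := by
    intro i hi; have := hmadd i; rw [if_neg (by omega)] at this; omega
  -- sums
  have hr' : r = (r - 1) + 1 := by omega
  have hsl : ∑ i ∈ Finset.range r, l1 i = (r - 1) * l1 0 := by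
    rw [hr', Finset.sum_range_succ, (hlzero (r-1) le_rfl).1, add_zero]
    rw [Finset.sum_congr rfl fun i hi => hlconst i (Finset.mem_range.mp hi)]
    simp [Finset.sum_const, mul_comm]
  have hsm : ∑ i ∈ Finset.range r, m1 i = r * m1 0 := by
    rw [Finset.sum_congr rfl fun i hi => hmconst i (Finset.mem_range.mp hi)]
    simp [Finset.sum_const, mul_comm]
  have key : (r - 1) * l1 0 = r * m1 0 := by rw [← hsl, ← hsm]; exact hs1
  have hale : l1 0 ≤ r := by have := hladd 0 (by omega); omega
  have hdvd : r ∣ l1 0 := by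
    have hcop : Nat.Coprime r (r - 1) := by
      rw [hr']; simp
    exact hcop.dvd_of_dvd_mul_left ⟨m1 0, key⟩
  obtain ⟨k, hk⟩ := hdvd
  rcases k with _ | k
  · -- l1 0 = 0, hence m1 0 = 0, left summand zero
    left
    have ha0 : l1 0 = 0 := by omega
    have hb0 : m1 0 = 0 := by
      rw [ha0, mul_zero] at key
      rcases Nat.mul_eq_zero.mp key.symm with h | h <;> omega
    intro i
    constructor
    · by_cases hi : i < r - 1
      · rw [hlconst i hi, ha0]
      · exact (hlzero i (by omega)).1
    · by_cases hi : i < r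
      · rw [hmconst i hi, hb0]
      · exact (hmzero i (by omega)).1
  · -- l1 0 = r, right summand zero
    right
    have har : l1 0 = r := by
      have : r * 1 ≤ r * (k + 1) := Nat.mul_le_mul_left r (by omega)
      omega
    have hbr : m1 0 = r - 1 := by
      rw [har, mul_comm (r-1) r] at key
      exact (Nat.eq_of_mul_eq_mul_left (by omega) key).symm
    intro i
    constructor
    · by_cases hi : i < r - 1
      · have := hladd i hi; have := hlconst i hi; omega
      · exact (hlzero i (by omega)).2
    · by_cases hi : i < r
      · have := hmadd' i hi; have := hmconst i hi; omega
      · exact (hmzero i (by omega)).2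
end

section
/- Let λ ≥_Dom μ be partitions of equal size. If λ = λ¹ + λ² and μ = μ¹ + μ² where, for some index j, the first j parts of λ¹ and μ¹ agree (λ¹_i = μ¹_i for i ≤ j), the first j parts of λ² and μ² agree, Σ_{i≤j} λ_i = Σ_{i≤j} μ_i, and the truncated tails satisfy (λ_{j+1},...,λ_r) ≥_Dom (μ_{j+1},...,μ_r) with equal sums, then λ¹ ≥_Dom μ¹ and λ² ≥_Dom μ² provided the tails of (λ¹,μ¹) and (λ²,μ²) are proportional rescalings (by factors 1/λ_j and (λ_j−1)/λ_j respectively) of the tails of (λ,μ). -/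
/-- let `lam ≥_Dom mu` be integer partitions of equal size with at most `r`
parts, and suppose the first `j` partial sums agree (`1 ≤ j ≤ r`) and `lam (j-1) > 0`
(0-indexed parts, so `lam (j-1)` is the `j`-th part `λ_j`). Define the real sequences
`l1 = (1^j) ⌢ (1/λ_j)·(tail of lam)`, `l2 = (lam_{≤ j} - 1^j) ⌢ ((λ_j - 1)/λ_j)·(tail)`,
and `m1, m2` analogously with `mu`-tails. Then all four are weakly decreasing and
nonnegative, `lam = l1 + l2`, `mu = m1 + m2`, and `l1 ≥_Dom m1`, `l2 ≥_Dom m2`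
(dominance of real partitions: leading partial sums weakly exceed, total sums equal). -/
theorem stmt19 (r j : ℕ) (hj1 : 1 ≤ j) (hjr : j ≤ r)
    (lam mu : ℕ → ℕ) (hlam : Antitone lam) (hmu : Antitone mu)
    (hlam0 : ∀ i, r ≤ i → lam i = 0) (hmu0 : ∀ i, r ≤ i → mu i = 0)
    (hsz : ∑ i ∈ Finset.range r, lam i = ∑ i ∈ Finset.range r, mu i)
    (hdom : ∀ t, t ≤ r → ∑ i ∈ Finset.range t, mu i ≤ ∑ i ∈ Finset.range t, lam i)
    (hj : ∑ i ∈ Finset.range j, lam i = ∑ i ∈ Finset.range j, mu i)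
    (hpos : 0 < lam (j - 1))
    (l1 l2 m1 m2 : ℕ → ℝ)
    (hl1 : ∀ i, l1 i = if i < j then 1 else (lam i : ℝ) / (lam (j - 1) : ℝ))
    (hl2 : ∀ i, l2 i = if i < j then (lam i : ℝ) - 1
      else (lam i : ℝ) * ((lam (j - 1) : ℝ) - 1) / (lam (j - 1) : ℝ))
    (hm1 : ∀ i, m1 i = if i < j then 1 else (mu i : ℝ) / (lam (j - 1) : ℝ))
    (hm2 : ∀ i, m2 i = if i < j then (mu i : ℝ) - 1
      else (mu i : ℝ) * ((lam (j - 1) : ℝ) - 1) / (lam (j - 1) : ℝ)) :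
    Antitone l1 ∧ Antitone l2 ∧ Antitone m1 ∧ Antitone m2 ∧
    (∀ i, 0 ≤ l1 i) ∧ (∀ i, 0 ≤ l2 i) ∧ (∀ i, 0 ≤ m1 i) ∧ (∀ i, 0 ≤ m2 i) ∧
    (∀ i, (lam i : ℝ) = l1 i + l2 i) ∧ (∀ i, (mu i : ℝ) = m1 i + m2 i) ∧
    (∀ t, t ≤ r → ∑ i ∈ Finset.range t, m1 i ≤ ∑ i ∈ Finset.range t, l1 i) ∧
    (∑ i ∈ Finset.range r, l1 i = ∑ i ∈ Finset.range r, m1 i) ∧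
    (∀ t, t ≤ r → ∑ i ∈ Finset.range t, m2 i ≤ ∑ i ∈ Finset.range t, l2 i) ∧
    (∑ i ∈ Finset.range r, l2 i = ∑ i ∈ Finset.range r, m2 i) := by
  set c := lam (j - 1) with hc_def
  have hcR : (0:ℝ) < (c:ℝ) := by exact_mod_cast hpos
  have hcne : (c:ℝ) ≠ 0 := ne_of_gt hcR
  have hc1 : (1:ℝ) ≤ (c:ℝ) := by exact_mod_cast hpos
  -- head / tail bounds
  have hlam_head : ∀ i, i < j → c ≤ lam i := fun i hi => hlam (by omega)
  have hmu_key : c ≤ mu (j - 1) := by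
    have h1 := hdom (j - 1) (by omega)
    have hj' : j - 1 + 1 = j := by omega
    have hj2 := hj
    rw [← hj', Finset.sum_range_succ, Finset.sum_range_succ] at hj2
    omega
  have hmu_head : ∀ i, i < j → c ≤ mu i := fun i hi =>
    le_trans hmu_key (hmu (by omega))
  have hlam_tail : ∀ i, j ≤ i → lam i ≤ c := fun i hi => hlam (by omega)
  have hmu_tail : ∀ i, j ≤ i → mu i ≤ c := by
    intro i hi
    by_cases hir : r ≤ i
    · rw [hmu0 i hir]; omega
    · push_neg at hir
      have h1 := hdom (j + 1) (by omega)
      rw [Finset.sum_range_succ, Finset.sum_range_succ] at h1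
      have h2 := hmu hi
      have h3 := hlam_tail j le_rfl
      omega
  -- cast versions
  have hlam_tailR : ∀ i, j ≤ i → (lam i : ℝ) ≤ c := fun i hi => by
    exact_mod_cast hlam_tail i hi
  have hmu_tailR : ∀ i, j ≤ i → (mu i : ℝ) ≤ c := fun i hi => by
    exact_mod_cast hmu_tail i hi
  have hlam_headR : ∀ i, i < j → (c:ℝ) ≤ lam i := fun i hi => by
    exact_mod_cast hlam_head i hi
  have hmu_headR : ∀ i, i < j → (c:ℝ) ≤ mu i := fun i hi => by
    exact_mod_cast hmu_head i hi
  have hlamR : ∀ a b : ℕ, a ≤ b → (lam b : ℝ) ≤ lam a := fun a b h => by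
    exact_mod_cast hlam h
  have hmuR : ∀ a b : ℕ, a ≤ b → (mu b : ℝ) ≤ mu a := fun a b h => by
    exact_mod_cast hmu h
  -- sum splitting
  have hsplit : ∀ (f : ℕ → ℝ) (t : ℕ), j ≤ t →
      ∑ i ∈ Finset.range t, f i
        = ∑ i ∈ Finset.range j, f i + ∑ i ∈ Finset.Ico j t, f i := by
    intro f t ht
    rw [Finset.range_eq_Ico, Finset.range_eq_Ico]
    exact (Finset.sum_Ico_consecutive _ (Nat.zero_le j) ht).symm
  have hsplitN : ∀ (f : ℕ → ℕ) (t : ℕ), j ≤ t →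
      ∑ i ∈ Finset.range t, f i
        = ∑ i ∈ Finset.range j, f i + ∑ i ∈ Finset.Ico j t, f i := by
    intro f t ht
    rw [Finset.range_eq_Ico, Finset.range_eq_Ico]
    exact (Finset.sum_Ico_consecutive _ (Nat.zero_le j) ht).symm
  have keyIco : ∀ t, j ≤ t → t ≤ r →
      ∑ i ∈ Finset.Ico j t, mu i ≤ ∑ i ∈ Finset.Ico j t, lam i := by
    intro t hjt htr
    have h1 := hdom t htr
    have e1 := hsplitN lam t hjt
    have e2 := hsplitN mu t hjt
    omega
  have keyIcoEq : ∑ i ∈ Finset.Ico j r, lam i = ∑ i ∈ Finset.Ico j r, mu i := by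
    have e1 := hsplitN lam r hjr
    have e2 := hsplitN mu r hjr
    omega
  have keyIcoR : ∀ t, j ≤ t → t ≤ r →
      (∑ i ∈ Finset.Ico j t, (mu i : ℝ)) ≤ ∑ i ∈ Finset.Ico j t, (lam i : ℝ) := by
    intro t hjt htr
    exact_mod_cast keyIco t hjt htr
  have keyIcoEqR : (∑ i ∈ Finset.Ico j r, (lam i : ℝ)) = ∑ i ∈ Finset.Ico j r, (mu i : ℝ) := by
    exact_mod_cast keyIcoEq
  have hjR : (∑ i ∈ Finset.range j, (lam i : ℝ)) = ∑ i ∈ Finset.range j, (mu i : ℝ) := by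
    exact_mod_cast hj
  -- closed forms of partial sums
  have suml1 : ∀ t, j ≤ t → ∑ i ∈ Finset.range t, l1 i
      = (j : ℝ) + (∑ i ∈ Finset.Ico j t, (lam i : ℝ)) / c := by
    intro t ht
    rw [hsplit l1 t ht]
    congr 1
    · rw [Finset.sum_congr rfl (fun i hi => by
        rw [hl1, if_pos (Finset.mem_range.mp hi)])]
      simp
    · rw [Finset.sum_div]
      exact Finset.sum_congr rfl (fun i hi => by
        rw [hl1, if_neg (Finset.mem_Ico.mp hi).1.not_gt])
  have summ1 : ∀ t, j ≤ t → ∑ i ∈ Finset.range t, m1 i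
      = (j : ℝ) + (∑ i ∈ Finset.Ico j t, (mu i : ℝ)) / c := by
    intro t ht
    rw [hsplit m1 t ht]
    congr 1
    · rw [Finset.sum_congr rfl (fun i hi => by
        rw [hm1, if_pos (Finset.mem_range.mp hi)])]
      simp
    · rw [Finset.sum_div]
      exact Finset.sum_congr rfl (fun i hi => by
        rw [hm1, if_neg (Finset.mem_Ico.mp hi).1.not_gt])
  have suml2 : ∀ t, j ≤ t → ∑ i ∈ Finset.range t, l2 i
      = ((∑ i ∈ Finset.range j, (lam i : ℝ)) - j)
        + (∑ i ∈ Finset.Ico j t, (lam i : ℝ)) * ((c:ℝ) - 1) / c := by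
    intro t ht
    rw [hsplit l2 t ht]
    congr 1
    · rw [Finset.sum_congr rfl (fun i hi => by
        rw [hl2, if_pos (Finset.mem_range.mp hi)]), Finset.sum_sub_distrib]
      simp
    · rw [Finset.sum_mul, Finset.sum_div]
      exact Finset.sum_congr rfl (fun i hi => by
        rw [hl2, if_neg (Finset.mem_Ico.mp hi).1.not_gt])
  have summ2 : ∀ t, j ≤ t → ∑ i ∈ Finset.range t, m2 i
      = ((∑ i ∈ Finset.range j, (mu i : ℝ)) - j)
        + (∑ i ∈ Finset.Ico j t, (mu i : ℝ)) * ((c:ℝ) - 1) / c := by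
    intro t ht
    rw [hsplit m2 t ht]
    congr 1
    · rw [Finset.sum_congr rfl (fun i hi => by
        rw [hm2, if_pos (Finset.mem_range.mp hi)]), Finset.sum_sub_distrib]
      simp
    · rw [Finset.sum_mul, Finset.sum_div]
      exact Finset.sum_congr rfl (fun i hi => by
        rw [hm2, if_neg (Finset.mem_Ico.mp hi).1.not_gt])
  refine ⟨?_, ?_, ?_, ?_, ?_, ?_, ?_, ?_, ?_, ?_, ?_, ?_, ?_, ?_⟩
  · -- Antitone l1
    apply antitone_nat_of_succ_le
    intro n
    rw [hl1, hl1]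
    by_cases h1 : n + 1 < j
    · rw [if_pos h1, if_pos (by omega)]
    · by_cases h2 : n < j
      · rw [if_neg h1, if_pos h2]
        rw [div_le_one hcR]
        exact hlam_tailR (n + 1) (by omega)
      · rw [if_neg h1, if_neg h2]
        gcongr
        exact_mod_cast hlam (Nat.le_succ n)
  · -- Antitone l2
    apply antitone_nat_of_succ_le
    intro n
    rw [hl2, hl2]
    by_cases h1 : n + 1 < j
    · rw [if_pos h1, if_pos (by omega)]
      have := hlamR n (n + 1) (Nat.le_succ n)
      linarith
    · by_cases h2 : n < j
      · rw [if_neg h1, if_pos h2]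
        have h3 := hlam_tailR (n + 1) (by omega)
        have h4 := hlam_headR n h2
        rw [div_le_iff₀ hcR]
        nlinarith
      · rw [if_neg h1, if_neg h2]
        have h5 := hlamR n (n + 1) (Nat.le_succ n)
        have h6 : (0:ℝ) ≤ (lam (n+1) : ℝ) := by positivity
        rw [div_le_div_iff₀ hcR hcR]
        nlinarith [mul_nonneg (mul_nonneg (sub_nonneg.mpr h5)
          (by linarith : (0:ℝ) ≤ (c:ℝ) - 1)) (le_of_lt hcR)]
  · -- Antitone m1
    apply antitone_nat_of_succ_le
    intro n
    rw [hm1, hm1]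
    by_cases h1 : n + 1 < j
    · rw [if_pos h1, if_pos (by omega)]
    · by_cases h2 : n < j
      · rw [if_neg h1, if_pos h2]
        rw [div_le_one hcR]
        exact hmu_tailR (n + 1) (by omega)
      · rw [if_neg h1, if_neg h2]
        gcongr
        exact_mod_cast hmu (Nat.le_succ n)
  · -- Antitone m2
    apply antitone_nat_of_succ_le
    intro n
    rw [hm2, hm2]
    by_cases h1 : n + 1 < j
    · rw [if_pos h1, if_pos (by omega)]
      have := hmuR n (n + 1) (Nat.le_succ n)
      linarith
    · by_cases h2 : n < j
      · rw [if_neg h1, if_pos h2]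
        have h3 := hmu_tailR (n + 1) (by omega)
        have h4 := hmu_headR n h2
        rw [div_le_iff₀ hcR]
        nlinarith
      · rw [if_neg h1, if_neg h2]
        have h5 := hmuR n (n + 1) (Nat.le_succ n)
        have h6 : (0:ℝ) ≤ (mu (n+1) : ℝ) := by positivity
        rw [div_le_div_iff₀ hcR hcR]
        nlinarith [mul_nonneg (mul_nonneg (sub_nonneg.mpr h5)
          (by linarith : (0:ℝ) ≤ (c:ℝ) - 1)) (le_of_lt hcR)]
  · -- l1 nonneg
    intro i
    rw [hl1]
    split
    · norm_num
    · positivity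
  · -- l2 nonneg
    intro i
    rw [hl2]
    split
    · rename_i h
      have := hlam_headR i h
      linarith
    · have h0 : (0:ℝ) ≤ (lam i : ℝ) := by positivity
      have : (0:ℝ) ≤ (c:ℝ) - 1 := by linarith
      positivity
  · -- m1 nonneg
    intro i
    rw [hm1]
    split
    · norm_num
    · positivity
  · -- m2 nonneg
    intro i
    rw [hm2]
    split
    · rename_i h
      have := hmu_headR i h
      linarith
    · have h0 : (0:ℝ) ≤ (mu i : ℝ) := by positivity
      have : (0:ℝ) ≤ (c:ℝ) - 1 := by linarith
      positivity
  · -- lam = l1 + l2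
    intro i
    rw [hl1, hl2]
    split
    · ring
    · field_simp
      ring
  · -- mu = m1 + m2
    intro i
    rw [hm1, hm2]
    split
    · ring
    · field_simp
      ring
  · -- dominance of l1 over m1
    intro t ht
    by_cases hjt : j ≤ t
    · rw [suml1 t hjt, summ1 t hjt]
      have h2 := (div_le_div_iff_of_pos_right hcR).mpr (keyIcoR t hjt ht)
      linarith
    · push_neg at hjt
      apply le_of_eq
      apply Finset.sum_congr rfl
      intro i hi
      have hij : i < j := by have := Finset.mem_range.mp hi; omega
      rw [hl1, hm1, if_pos hij, if_pos hij]
  · -- equal sums l1 m1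
    rw [suml1 r hjr, summ1 r hjr, keyIcoEqR]
  · -- dominance of l2 over m2
    intro t ht
    by_cases hjt : j ≤ t
    · rw [suml2 t hjt, summ2 t hjt, hjR]
      have key := keyIcoR t hjt ht
      have h2 := (div_le_div_iff_of_pos_right hcR).mpr
        (mul_le_mul_of_nonneg_right key (by linarith : (0:ℝ) ≤ (c:ℝ) - 1))
      linarith
    · push_neg at hjt
      have e1 : ∑ i ∈ Finset.range t, l2 i
          = (∑ i ∈ Finset.range t, (lam i : ℝ)) - t := by
        rw [Finset.sum_congr rfl (fun i hi => by
          rw [hl2, if_pos (by have := Finset.mem_range.mp hi; omega)]),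
          Finset.sum_sub_distrib]
        simp
      have e2 : ∑ i ∈ Finset.range t, m2 i
          = (∑ i ∈ Finset.range t, (mu i : ℝ)) - t := by
        rw [Finset.sum_congr rfl (fun i hi => by
          rw [hm2, if_pos (by have := Finset.mem_range.mp hi; omega)]),
          Finset.sum_sub_distrib]
        simp
      rw [e1, e2]
      have : (∑ i ∈ Finset.range t, (mu i : ℝ)) ≤ ∑ i ∈ Finset.range t, (lam i : ℝ) := by
        exact_mod_cast hdom t ht
      linarith
  · -- equal sums l2 m2
    rw [suml2 r hjr, summ2 r hjr, hjR, keyIcoEqR]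
end
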